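/- arXiv:0810.0187 — 13 statements merged into one kernel-verified Lean document; each statement's English description precedes it below -/
import Mathlib

section
/- Let v : Fin 4 → ℝ³ be an affinely independent family with Δ = convexHull ℝ (Set.range v), and let e be a point of the topological interior of Δ. Then Δ is the union of the four subtetrahedra: convexHull ℝ (Set.range v) = ⋃ i, convexHull ℝ ((Set.range v \ {v i}) ∪ {e}). -/
/-- Definition 1.1 (refinement of a tetrahedron): the four subtetrahedra cover Δ.
If `v : Fin 4 → ℝ³` is affinely independent and `e` lies in the interior of the
tetrahedron `Δ = convexHull ℝ (Set.range v)`, then `Δ` is the union of the four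
subtetrahedra obtained by replacing one vertex `v i` with `e`. -/
theorem refinement_union
    (v : Fin 4 → EuclideanSpace ℝ (Fin 3)) (hv : AffineIndependent ℝ v)
    (e : EuclideanSpace ℝ (Fin 3))
    (he : e ∈ interior (convexHull ℝ (Set.range v))) :
    convexHull ℝ (Set.range v) =
      ⋃ i : Fin 4, convexHull ℝ ((Set.range v \ {v i}) ∪ {e}) := by
  have heΔ : e ∈ convexHull ℝ (Set.range v) := interior_subset he
  have hspan : affineSpan ℝ (Set.range v) = ⊤ := by
    rw [hv.affineSpan_eq_top_iff_card_eq_finrank_add_one]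
    simp
  let b : AffineBasis (Fin 4) ℝ (EuclideanSpace ℝ (Fin 3)) := ⟨v, hv, hspan⟩
  have hbv : ⇑b = v := rfl
  apply Set.Subset.antisymm
  · intro x hx
    set c : Fin 4 → ℝ := fun j => b.coord j e with hc
    set w : Fin 4 → ℝ := fun j => b.coord j x with hw
    have hcpos : ∀ j, 0 < c j := by
      have h := b.interior_convexHull
      rw [hbv] at h
      rw [h] at he
      exact he
    have hwnn : ∀ j, 0 ≤ w j := by
      have h := b.convexHull_eq_nonneg_coord
      rw [hbv] at h
      rw [h] at hx
      exact hx
    have hcsum : ∑ j, c j = 1 := b.sum_coord_apply_eq_one e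
    have hwsum : ∑ j, w j = 1 := b.sum_coord_apply_eq_one x
    have hex : e = ∑ j, c j • v j := by
      have h1 := b.affineCombination_coord_eq_self e
      rwa [Finset.affineCombination_eq_linear_combination _ _ _ hcsum, hbv, eq_comm] at h1
    have hxx : x = ∑ j, w j • v j := by
      have h1 := b.affineCombination_coord_eq_self x
      rwa [Finset.affineCombination_eq_linear_combination _ _ _ hwsum, hbv, eq_comm] at h1
    obtain ⟨i, -, hi⟩ := Finset.exists_min_image Finset.univ (fun j => w j / c j)
      ⟨0, Finset.mem_univ 0⟩
    set t : ℝ := w i / c i with ht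
    have htnn : 0 ≤ t := div_nonneg (hwnn i) (hcpos i).le
    have hwi : w i - t * c i = 0 := by
      rw [ht, div_mul_cancel₀ _ (hcpos i).ne', sub_self]
    have hkey : ∀ j, 0 ≤ w j - t * c j := fun j => by
      have h1 : t ≤ w j / c j := hi j (Finset.mem_univ j)
      have := (le_div_iff₀ (hcpos j)).mp h1
      linarith
    set W : Fin 4 → ℝ := Function.update (fun j => w j - t * c j) i t with hW
    set P : Fin 4 → EuclideanSpace ℝ (Fin 3) := Function.update v i e with hP
    have hWnn : ∀ j ∈ Finset.univ, (0:ℝ) ≤ W j := by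
      intro j _
      rcases eq_or_ne j i with rfl | hji
      · simpa [hW] using htnn
      · simpa [hW, Function.update_of_ne hji] using hkey j
    have hWsum : ∑ j, W j = 1 := by
      rw [hW, Finset.sum_update_of_mem (Finset.mem_univ i), ← Finset.erase_eq,
        Finset.sum_erase (f := fun j => w j - t * c j) _ hwi, Finset.sum_sub_distrib, hwsum, ← Finset.mul_sum,
        hcsum, mul_one]
      ring
    have hxW : x = ∑ j, W j • P j := by
      have hstep : ∀ j, W j • P j =
          Function.update (fun j => (w j - t * c j) • v j) i (t • e) j := by
        intro j
        rcases eq_or_ne j i with rfl | hji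
        · simp [hW, hP]
        · simp [hW, hP, Function.update_of_ne hji]
      have herase : ∑ j ∈ Finset.univ.erase i, (w j - t * c j) • v j
          = ∑ j, (w j - t * c j) • v j :=
        Finset.sum_erase _ (by rw [hwi, zero_smul])
      rw [Finset.sum_congr rfl (fun j _ => hstep j),
        Finset.sum_update_of_mem (Finset.mem_univ i), ← Finset.erase_eq,
        herase, hex, Finset.smul_sum]
      rw [hxx, ← Finset.sum_add_distrib]
      refine Finset.sum_congr rfl fun j _ => ?_
      rw [smul_smul, ← add_smul]
      ring_nf
    have hmem : ∀ j ∈ Finset.univ, P j ∈ (Set.range v \ {v i}) ∪ {e} := by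
      intro j _
      rcases eq_or_ne j i with rfl | hji
      · simp [hP]
      · rw [hP, Function.update_of_ne hji]
        refine Or.inl ⟨Set.mem_range_self j, ?_⟩
        simp only [Set.mem_singleton_iff]
        exact fun h => hji (hv.injective h)
      
    have := Finset.centerMass_mem_convexHull (t := Finset.univ) (w := W) (z := P)
      hWnn (by rw [hWsum]; norm_num) hmem
    rw [Finset.centerMass_eq_of_sum_1 _ _ hWsum, ← hxW] at this
    exact Set.mem_iUnion.mpr ⟨i, this⟩
  · refine Set.iUnion_subset fun i => convexHull_min ?_ (convex_convexHull _ _)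
    refine Set.union_subset ?_ ?_
    · exact Set.diff_subset.trans (subset_convexHull _ _)
    · exact Set.singleton_subset_iff.mpr heΔ
end

section
/- Let v : Fin 4 → ℝ³ be an affinely independent family with Δ = convexHull ℝ (Set.range v), and let e be in the interior of Δ. Then the subtetrahedra Δᵢ = convexHull ℝ ((Set.range v \ {v i}) ∪ {e}) have pairwise disjoint topological interiors: for all i ≠ j in Fin 4, interior Δᵢ ∩ interior Δⱼ = ∅. -/
/-- The four subtetrahedra of the refinement of Definition 1.1 have pairwise
disjoint topological interiors. -/
theorem refinement_interiors_disjoint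
    (v : Fin 4 → EuclideanSpace ℝ (Fin 3)) (hv : AffineIndependent ℝ v)
    (e : EuclideanSpace ℝ (Fin 3))
    (he : e ∈ interior (convexHull ℝ (Set.range v))) :
    ∀ i j : Fin 4, i ≠ j →
      interior (convexHull ℝ ((Set.range v \ {v i}) ∪ {e})) ∩
        interior (convexHull ℝ ((Set.range v \ {v j}) ∪ {e})) = ∅ := by
  classical
  intro i j hij
  have hspan : affineSpan ℝ (Set.range v) = ⊤ := by
    rw [hv.affineSpan_eq_top_iff_card_eq_finrank_add_one]
    simp
  set b : AffineBasis (Fin 4) ℝ (EuclideanSpace ℝ (Fin 3)) := ⟨v, hv, hspan⟩ with hb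
  have hrange : Set.range v = Set.range (⇑b) := rfl
  rw [hrange, b.interior_convexHull] at he
  set c : Fin 4 → ℝ := fun k => b.coord k e with hc
  have hcpos : ∀ k, 0 < c k := he
  set f : EuclideanSpace ℝ (Fin 3) →ᵃ[ℝ] ℝ := c i • b.coord j - c j • b.coord i with hf
  have hfapp : ∀ x, f x = c i * b.coord j x - c j * b.coord i x := fun x => rfl
  have hcoordv : ∀ k l : Fin 4, b.coord k (v l) = if k = l then 1 else 0 := fun k l =>
    b.coord_apply k l
  have hfe : f e = 0 := by
    rw [hfapp]
    show c i * c j - c j * c i = 0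
    ring
  have hfvi : f (v i) = -c j := by
    rw [hfapp, hcoordv, hcoordv, if_neg (Ne.symm hij), if_pos rfl]; ring
  have hfvj : f (v j) = c i := by
    rw [hfapp, hcoordv, hcoordv, if_pos rfl, if_neg hij]; ring
  have hinj := hv.injective
  -- f ≥ 0 on Δᵢ
  have hge : ∀ x ∈ convexHull ℝ ((Set.range v \ {v i}) ∪ {e}), 0 ≤ f x := by
    intro x hx
    have hconv : Convex ℝ (f ⁻¹' Set.Ici (0:ℝ)) := (convex_Ici (0:ℝ)).affine_preimage f
    refine convexHull_min ?_ hconv hx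
    rintro y (⟨⟨k, rfl⟩, hy2⟩ | rfl)
    · have hk : k ≠ i := fun h => hy2 (by rw [h]; rfl)
      simp only [Set.mem_preimage, Set.mem_Ici]
      rw [hfapp, hcoordv, hcoordv, if_neg (fun h : i = k => hk h.symm)]
      rcases eq_or_ne j k with h | h
      · rw [if_pos h]; nlinarith [hcpos i]
      · rw [if_neg h]; simp
    · simp only [Set.mem_preimage, Set.mem_Ici, hfe, le_refl]
  -- f ≤ 0 on Δⱼ
  have hle : ∀ x ∈ convexHull ℝ ((Set.range v \ {v j}) ∪ {e}), f x ≤ 0 := by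
    intro x hx
    have hconv : Convex ℝ (f ⁻¹' Set.Iic (0:ℝ)) := (convex_Iic (0:ℝ)).affine_preimage f
    refine convexHull_min ?_ hconv hx
    rintro y (⟨⟨k, rfl⟩, hy2⟩ | rfl)
    · have hk : k ≠ j := fun h => hy2 (by rw [h]; rfl)
      simp only [Set.mem_preimage, Set.mem_Iic]
      rw [hfapp, hcoordv, hcoordv, if_neg (fun h : j = k => hk h.symm)]
      rcases eq_or_ne i k with h | h
      · rw [if_pos h]; nlinarith [hcpos j]
      · rw [if_neg h]; simp
    · simp only [Set.mem_preimage, Set.mem_Iic, hfe, le_refl]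
  -- main argument
  ext x
  simp only [Set.mem_inter_iff, Set.mem_empty_iff_false, iff_false, not_and]
  intro hxi hxj
  have hfx0 : f x = 0 :=
    le_antisymm (hle x (interior_subset hxj)) (hge x (interior_subset hxi))
  set u : EuclideanSpace ℝ (Fin 3) := v i - v j with hu
  have hune : u ≠ 0 := sub_ne_zero.mpr (fun h => hij (hinj h))
  have hnu : 0 < ‖u‖ := norm_pos_iff.mpr hune
  have hlin : f.linear u = -(c i + c j) := by
    have h2 := f.linearMap_vsub (v i) (v j)
    simp only [vsub_eq_sub] at h2
    rw [hu, h2, hfvi, hfvj]; ring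
  obtain ⟨ε, hε, hball⟩ := Metric.isOpen_iff.mp isOpen_interior x hxi
  have htpos : 0 < ε / (2 * ‖u‖) := div_pos hε (by linarith)
  set t : ℝ := ε / (2 * ‖u‖) with ht
  have hmem : x + t • u ∈ convexHull ℝ ((Set.range v \ {v i}) ∪ {e}) := by
    apply interior_subset
    apply hball
    rw [Metric.mem_ball, dist_eq_norm, add_sub_cancel_left, norm_smul, Real.norm_eq_abs,
      abs_of_pos htpos, ht]
    have h3 : ε / (2 * ‖u‖) * ‖u‖ = ε / 2 := by
      field_simp
    rw [h3]; linarith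
  have hfp : f (x + t • u) = f x + t * f.linear u := by
    have h1 : x + t • u = (t • u) +ᵥ x := add_comm _ _
    rw [h1, f.map_vadd, f.linear.map_smul, smul_eq_mul, vadd_eq_add, add_comm]
  have h4 : 0 ≤ f (x + t • u) := hge _ hmem
  rw [hfp, hfx0, hlin] at h4
  nlinarith [hcpos i, hcpos j]
end

section
/- Let v : Fin 4 → ℝ³ be an affinely independent family with Δ = convexHull ℝ (Set.range v), and let e be in the interior of Δ. Then for all i ≠ j in Fin 4, the two subtetrahedra intersect exactly in their common triangular face containing e: Δᵢ ∩ Δⱼ = convexHull ℝ ((Set.range v \ {v i, v j}) ∪ {e}). -/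
open Finset

private lemma coord_of_rep (b : AffineBasis (Fin 4) ℝ (EuclideanSpace ℝ (Fin 3)))
    (e : EuclideanSpace ℝ (Fin 3)) (i : Fin 4) (a : Fin 4 → ℝ) (ha1 : ∑ k, a k = 1)
    (m : Fin 4) :
    b.coord m (∑ k, a k • Function.update (⇑b) i e k)
      = (if m = i then 0 else a m) + a i * b.coord m e := by
  classical
  set w : Fin 4 → ℝ := fun k => b.coord k e with hwdef
  set c : Fin 4 → ℝ := fun m => (if m = i then 0 else a m) + a i * w m with hcdef
  have he : ∑ k, w k • b k = e := b.linear_combination_coord_eq_self e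
  have hw1 : ∑ m, w m = 1 := b.sum_coord_apply_eq_one e
  have hu : ∀ k, a k • Function.update (⇑b) i e k
      = Function.update (fun k => a k • b k) i (a i • e) k := by
    intro k
    rcases eq_or_ne k i with rfl | h
    · simp
    · simp [Function.update_of_ne h]
  have herase : ∑ k, a k • Function.update (⇑b) i e k
      = a i • e + ∑ k ∈ Finset.univ.erase i, a k • b k := by
    rw [Finset.sum_congr rfl fun k _ => hu k,
      Finset.sum_update_of_mem (Finset.mem_univ i), Finset.sdiff_singleton_eq_erase]
  have hif : ∀ m : Fin 4, (if m = i then (0:ℝ) else a m) • b m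
      = Function.update (fun m => a m • b m) i 0 m := by
    intro m
    rcases eq_or_ne m i with rfl | h
    · simp
    · simp [Function.update_of_ne h, h]
  have hceq : ∑ m, c m • b m = ∑ k, a k • Function.update (⇑b) i e k := by
    rw [herase]
    calc ∑ m, c m • b m
        = ∑ m, ((if m = i then (0:ℝ) else a m) • b m + (a i * w m) • b m) := by
          simp [hcdef, add_smul]
      _ = (∑ m, (if m = i then (0:ℝ) else a m) • b m) + a i • ∑ m, w m • b m := by
          rw [Finset.sum_add_distrib, Finset.smul_sum]
          simp [mul_smul]
      _ = (∑ m ∈ Finset.univ.erase i, a m • b m) + a i • e := by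
          rw [he, Finset.sum_congr rfl fun m _ => hif m,
            Finset.sum_update_of_mem (Finset.mem_univ i), Finset.sdiff_singleton_eq_erase,
            zero_add]
      _ = a i • e + ∑ k ∈ Finset.univ.erase i, a k • b k := by rw [add_comm]
  have hupd : ∀ m : Fin 4, (if m = i then (0:ℝ) else a m) = Function.update a i 0 m := by
    intro m
    rcases eq_or_ne m i with rfl | h
    · simp
    · simp [Function.update_of_ne h, h]
  have hsumerase : a i + ∑ m ∈ Finset.univ.erase i, a m = 1 := by
    rw [Finset.add_sum_erase Finset.univ a (Finset.mem_univ i)]; exact ha1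
  have hc1 : ∑ m, c m = 1 := by
    have h2 : ∑ m, (if m = i then (0:ℝ) else a m) = 1 - a i := by
      rw [Finset.sum_congr rfl fun m _ => hupd m,
        Finset.sum_update_of_mem (Finset.mem_univ i), Finset.sdiff_singleton_eq_erase,
        zero_add]
      linarith
    rw [hcdef]
    rw [Finset.sum_add_distrib, h2, ← Finset.mul_sum, hw1]
    ring
  calc b.coord m (∑ k, a k • Function.update (⇑b) i e k)
      = b.coord m (Finset.univ.affineCombination ℝ ⇑b c) := by
        rw [Finset.univ.affineCombination_eq_linear_combination ⇑b c hc1, hceq]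
    _ = c m := b.coord_apply_combination_of_mem (Finset.mem_univ m) hc1

private lemma mem_conv_elim {v : Fin 4 → EuclideanSpace ℝ (Fin 3)}
    (hinj : Function.Injective v) {e x : EuclideanSpace ℝ (Fin 3)} {i : Fin 4}
    (hx : x ∈ convexHull ℝ ((Set.range v \ {v i}) ∪ {e})) :
    ∃ a : Fin 4 → ℝ, (∀ k, 0 ≤ a k) ∧ ∑ k, a k = 1 ∧
      ∑ k, a k • Function.update v i e k = x := by
  classical
  have hset : (Set.range v \ {v i}) ∪ {e} = Set.range (Function.update v i e) := by
    ext y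
    simp only [Set.mem_union, Set.mem_diff, Set.mem_range, Set.mem_singleton_iff]
    constructor
    · rintro (⟨⟨k, rfl⟩, hne⟩ | rfl)
      · have hk : k ≠ i := fun h => hne (h ▸ rfl)
        exact ⟨k, Function.update_of_ne hk _ _⟩
      · exact ⟨i, by simp⟩
    · rintro ⟨k, rfl⟩
      rcases eq_or_ne k i with rfl | h
      · right; simp
      · left
        rw [Function.update_of_ne h]
        exact ⟨⟨k, rfl⟩, fun hEq => h (hinj hEq)⟩
  rw [hset, convexHull_range_eq_exists_affineCombination] at hx
  obtain ⟨s, wt, h0, h1, hx⟩ := hx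
  have h1' : ∑ k, Set.indicator (↑s) wt k = 1 := by
    rw [Finset.sum_indicator_subset wt (Finset.subset_univ s)]; exact h1
  refine ⟨Set.indicator ↑s wt, fun k => ?_, h1', ?_⟩
  · by_cases h : k ∈ s
    · simpa [Set.indicator, h] using h0 k h
    · simp [Set.indicator, h]
  · rw [← Finset.univ.affineCombination_eq_linear_combination _ _ h1',
      ← Finset.affineCombination_indicator_subset wt _ (Finset.subset_univ s)]
    exact hx

/-- Two distinct subtetrahedra of the refinement of Definition 1.1 intersect
exactly in their common triangular face containing `e`. -/
theorem refinement_pairwise_intersection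
    (v : Fin 4 → EuclideanSpace ℝ (Fin 3)) (hv : AffineIndependent ℝ v)
    (e : EuclideanSpace ℝ (Fin 3))
    (he : e ∈ interior (convexHull ℝ (Set.range v))) :
    ∀ i j : Fin 4, i ≠ j →
      convexHull ℝ ((Set.range v \ {v i}) ∪ {e}) ∩
        convexHull ℝ ((Set.range v \ {v j}) ∪ {e}) =
      convexHull ℝ ((Set.range v \ {v i, v j}) ∪ {e}) := by
  classical
  intro i j hij
  have hinj : Function.Injective v := hv.injective
  have htop : affineSpan ℝ (Set.range v) = ⊤ :=
    hv.affineSpan_eq_top_iff_card_eq_finrank_add_one.mpr (by simp)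
  let b : AffineBasis (Fin 4) ℝ (EuclideanSpace ℝ (Fin 3)) := ⟨v, hv, htop⟩
  have hb : ⇑b = v := rfl
  have hw : ∀ k, 0 < b.coord k e := by
    have := b.interior_convexHull
    rw [hb] at this
    rw [this] at he
    exact he
  apply Set.Subset.antisymm
  · rintro x ⟨hxi, hxj⟩
    obtain ⟨a, ha0, ha1, hax⟩ := mem_conv_elim hinj hxi
    obtain ⟨a', ha'0, ha'1, ha'x⟩ := mem_conv_elim hinj hxj
    have hcoord : ∀ m, (if m = i then 0 else a m) + a i * b.coord m e
        = (if m = j then 0 else a' m) + a' j * b.coord m e := by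
      intro m
      have h1 := coord_of_rep b e i a ha1 m
      have h2 := coord_of_rep b e j a' ha'1 m
      rw [hb, hax] at h1
      rw [hb, ha'x] at h2
      rw [← h1, ← h2]
    have hci := hcoord i
    have hcj := hcoord j
    rw [if_pos rfl, if_neg hij] at hci
    rw [if_neg hij.symm, if_pos rfl] at hcj
    -- hci : a i * w i = a' i + a' j * w i ; hcj : a j + a i * w j = a' j * w j
    have hle1 : a i ≤ a' j := by nlinarith [hw j, ha0 j, mul_pos (hw j) (hw j)]
    have hle2 : a' j ≤ a i := by nlinarith [hw i, ha'0 i]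
    have heq : a i = a' j := le_antisymm hle1 hle2
    have ha'i : a' i = 0 := by nlinarith [hw i]
    -- now x = ∑ a' k • update v j e k with a' i = 0
    rw [← ha'x]
    have hdrop : ∑ k, a' k • Function.update v j e k
        = ∑ k ∈ Finset.univ.erase i, a' k • Function.update v j e k := by
      refine (Finset.sum_erase _ ?_).symm
      rw [ha'i, zero_smul]
    have hsum : ∑ k ∈ Finset.univ.erase i, a' k = 1 := by
      rw [Finset.sum_erase _ ha'i]; exact ha'1
    rw [hdrop, ← Finset.centerMass_eq_of_sum_1 _ _ hsum]
    apply Finset.centerMass_mem_convexHull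
    · exact fun k _ => ha'0 k
    · rw [hsum]; exact one_pos
    · intro k hk
      have hki : k ≠ i := Finset.ne_of_mem_erase hk
      rcases eq_or_ne k j with rfl | hkj
      · right; simp
      · left
        rw [Function.update_of_ne hkj]
        refine ⟨⟨k, rfl⟩, ?_⟩
        simp only [Set.mem_insert_iff, Set.mem_singleton_iff]
        push_neg
        exact ⟨fun h => hki (hinj h), fun h => hkj (hinj h)⟩
  · intro x hx
    constructor
    · refine convexHull_mono ?_ hx
      apply Set.union_subset_union_left
      apply Set.diff_subset_diff_right
      intro y hy
      simp only [Set.mem_singleton_iff] at hy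
      simp [hy]
    · refine convexHull_mono ?_ hx
      apply Set.union_subset_union_left
      apply Set.diff_subset_diff_right
      intro y hy
      simp only [Set.mem_singleton_iff] at hy
      simp [hy]
end

section
/- Let v : Fin 4 → ℝ³ be an affinely independent family with Δ = convexHull ℝ (Set.range v), and let e be in the interior of Δ. Then for pairwise distinct i, j, k in Fin 4 with l the remaining fourth index, the three subtetrahedra Δᵢ, Δⱼ, Δₖ intersect exactly in the segment from v l to e: Δᵢ ∩ Δⱼ ∩ Δₖ = convexHull ℝ {v l, e} = segment ℝ (v l) e. -/
/-- Replacing one point of an injective family by `e` at the level of sets. -/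
lemma range_update_eq' {α β : Type*} [DecidableEq α] {v : α → β}
    (hv : Function.Injective v) (m : α) (e : β) :
    (Set.range v \ {v m}) ∪ {e} = Set.range (Function.update v m e) := by
  ext x
  constructor
  · rintro (⟨⟨n, rfl⟩, hne⟩ | rfl)
    · have hnm : n ≠ m := fun h => hne (by subst h; rfl)
      exact ⟨n, Function.update_of_ne hnm _ _⟩
    · exact ⟨m, Function.update_self _ _ _⟩
  · rintro ⟨n, rfl⟩
    by_cases h : n = m
    · subst h; right; simp
    · left
      rw [Function.update_of_ne h]
      exact ⟨⟨n, rfl⟩, fun hx => h (hv (Set.mem_singleton_iff.mp hx))⟩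

/-- Key coordinate bound: if `x` is in the subtetrahedron obtained by replacing the
vertex `b m` with `e`, then the barycentric coordinates of `x` dominate a common
multiple of those of `e`, with equality at `m`. -/
lemma key_coord {ι : Type*} [Fintype ι] [DecidableEq ι]
    (b : AffineBasis ι ℝ (EuclideanSpace ℝ (Fin 3))) (e : EuclideanSpace ℝ (Fin 3))
    (m : ι) (x : EuclideanSpace ℝ (Fin 3))
    (hx : x ∈ convexHull ℝ (Set.range (Function.update (⇑b) m e))) :
    ∃ c : ℝ, 0 ≤ c ∧ b.coord m x = c * b.coord m e ∧
      ∀ n, c * b.coord n e ≤ b.coord n x := by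
  rw [convexHull_range_eq_exists_affineCombination] at hx
  obtain ⟨s, w, hw0, hw1, hxe⟩ := hx
  set u : ι → EuclideanSpace ℝ (Fin 3) := Function.update (⇑b) m e with hu
  set w' : ι → ℝ := Set.indicator (↑s) w with hw'
  have hw'0 : ∀ n, 0 ≤ w' n := fun n =>
    Set.indicator_apply_nonneg (fun h => hw0 n h)
  have hw'1 : ∑ n, w' n = 1 := by
    rw [← Finset.sum_indicator_subset w s.subset_univ] at hw1
    exact hw1
  have hxe' : Finset.univ.affineCombination ℝ u w' = x := by
    rw [← Finset.affineCombination_indicator_subset w u s.subset_univ]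
    exact hxe
  have hcoord : ∀ p, b.coord p x =
      w' m * b.coord p e + (if p ∈ Finset.univ.erase m then w' p else 0) := by
    intro p
    have h1 : b.coord p x = ∑ n, w' n * b.coord p (u n) := by
      rw [← hxe', Finset.map_affineCombination Finset.univ u w' hw'1 (b.coord p),
        Finset.affineCombination_eq_linear_combination Finset.univ _ _ hw'1]
      simp [Function.comp, smul_eq_mul]
    rw [h1, ← Finset.add_sum_erase Finset.univ _ (Finset.mem_univ m)]
    have hm : u m = e := Function.update_self _ _ _
    rw [hm]
    congr 1
    have h2 : ∀ n ∈ Finset.univ.erase m,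
        w' n * b.coord p (u n) = if n = p then w' n else 0 := by
      intro n hn
      rw [hu]
      rw [Function.update_of_ne (Finset.ne_of_mem_erase hn), b.coord_apply]
      by_cases h : p = n
      · simp [h]
      · simp [h, Ne.symm h]
    rw [Finset.sum_congr rfl h2]
    exact Finset.sum_ite_eq' _ _ _
  refine ⟨w' m, hw'0 m, ?_, ?_⟩
  · have h := hcoord m
    simpa using h
  · intro n
    rw [hcoord n]
    have h0 : 0 ≤ (if n ∈ Finset.univ.erase m then w' n else 0) := by
      split_ifs
      · exact hw'0 n
      · exact le_rfl
    linarith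

/-- Three distinct subtetrahedra of the refinement of Definition 1.1 intersect
exactly in the segment joining the remaining vertex `v l` to `e`. -/
theorem refinement_triple_intersection
    (v : Fin 4 → EuclideanSpace ℝ (Fin 3)) (hv : AffineIndependent ℝ v)
    (e : EuclideanSpace ℝ (Fin 3))
    (he : e ∈ interior (convexHull ℝ (Set.range v))) :
    ∀ i j k l : Fin 4, i ≠ j → i ≠ k → i ≠ l → j ≠ k → j ≠ l → k ≠ l →
      convexHull ℝ ((Set.range v \ {v i}) ∪ {e}) ∩
        convexHull ℝ ((Set.range v \ {v j}) ∪ {e}) ∩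
        convexHull ℝ ((Set.range v \ {v k}) ∪ {e}) =
        convexHull ℝ {v l, e} ∧
      convexHull ℝ ((Set.range v \ {v i}) ∪ {e}) ∩
        convexHull ℝ ((Set.range v \ {v j}) ∪ {e}) ∩
        convexHull ℝ ((Set.range v \ {v k}) ∪ {e}) =
        segment ℝ (v l) e := by
  intro i j k l hij hik hil hjk hjl hkl
  have htot : affineSpan ℝ (Set.range v) = ⊤ := by
    rw [hv.affineSpan_eq_top_iff_card_eq_finrank_add_one]
    simp
  set b : AffineBasis (Fin 4) ℝ (EuclideanSpace ℝ (Fin 3)) := ⟨v, hv, htot⟩ with hb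
  have hbv : ⇑b = v := rfl
  have hw : ∀ n, 0 < b.coord n e := by
    have he' : e ∈ interior (convexHull ℝ (Set.range ⇑b)) := he
    rw [b.interior_convexHull] at he'
    exact he'
  have hinj : Function.Injective v := hv.injective
  have huniv : (Finset.univ : Finset (Fin 4)) = {i, j, k, l} := by
    symm
    apply Finset.eq_univ_of_card
    rw [Finset.card_insert_of_notMem (by simp [hij, hik, hil]),
      Finset.card_insert_of_notMem (by simp [hjk, hjl]),
      Finset.card_insert_of_notMem (by simp [hkl]), Finset.card_singleton]
    simp
  have hsum4 : ∀ {M : Type} [AddCommMonoid M] (f : Fin 4 → M),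
      ∑ n, f n = f i + (f j + (f k + f l)) := by
    intro M _ f
    rw [huniv, Finset.sum_insert (by simp [hij, hik, hil]),
      Finset.sum_insert (by simp [hjk, hjl]),
      Finset.sum_insert (by simp [hkl]), Finset.sum_singleton]
  have main : convexHull ℝ ((Set.range v \ {v i}) ∪ {e}) ∩
        convexHull ℝ ((Set.range v \ {v j}) ∪ {e}) ∩
        convexHull ℝ ((Set.range v \ {v k}) ∪ {e}) =
        segment ℝ (v l) e := by
    apply Set.Subset.antisymm
    · rintro x ⟨⟨hxi, hxj⟩, hxk⟩
      rw [range_update_eq' hinj i e] at hxi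
      rw [range_update_eq' hinj j e] at hxj
      rw [range_update_eq' hinj k e] at hxk
      obtain ⟨ci, hci0, hcii, hcin⟩ := key_coord b e i x hxi
      obtain ⟨cj, hcj0, hcjj, hcjn⟩ := key_coord b e j x hxj
      obtain ⟨ck, hck0, hckk, hckn⟩ := key_coord b e k x hxk
      have hwi := hw i
      have hwj := hw j
      have hwk := hw k
      have hwl := hw l
      have hji : cj ≤ ci := by
        have h := hcjn i; rw [hcii] at h
        exact le_of_mul_le_mul_right h hwi
      have hij' : ci ≤ cj := by
        have h := hcin j; rw [hcjj] at h
        exact le_of_mul_le_mul_right h hwj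
      have hki : ck ≤ ci := by
        have h := hckn i; rw [hcii] at h
        exact le_of_mul_le_mul_right h hwi
      have hik' : ci ≤ ck := by
        have h := hcin k; rw [hckk] at h
        exact le_of_mul_le_mul_right h hwk
      have hcj : cj = ci := le_antisymm hji hij'
      have hck : ck = ci := le_antisymm hki hik'
      rw [hcj] at hcjj
      rw [hck] at hckk
      have hl : ci * b.coord l e ≤ b.coord l x := hcin l
      have hsumx : ∑ n, b.coord n x = 1 := b.sum_coord_apply_eq_one x
      have hsume : ∑ n, b.coord n e = 1 := b.sum_coord_apply_eq_one e
      rw [hsum4] at hsumx hsume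
      rw [hcii, hcjj, hckk] at hsumx
      have hex : (ci * b.coord i e) • v i + ((ci * b.coord j e) • v j +
          ((ci * b.coord k e) • v k + (b.coord l x) • v l)) = x := by
        have h := b.linear_combination_coord_eq_self x
        rw [hsum4, hbv, hcii, hcjj, hckk] at h
        exact h
      have hee : (b.coord i e) • v i + ((b.coord j e) • v j +
          ((b.coord k e) • v k + (b.coord l e) • v l)) = e := by
        have h := b.linear_combination_coord_eq_self e
        rw [hsum4, hbv] at h
        exact h
      set wi := b.coord i e with hdwi
      set wj := b.coord j e with hdwj
      set wk := b.coord k e with hdwk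
      set wl := b.coord l e with hdwl
      set cl := b.coord l x with hdcl
      refine ⟨cl - ci * wl, ci, by linarith, hci0,
        by linear_combination hsumx - ci * hsume, ?_⟩
      rw [← hex, ← hee]
      module
    · intro y hy
      have hkey : ∀ m : Fin 4, m ≠ l →
          segment ℝ (v l) e ⊆ convexHull ℝ ((Set.range v \ {v m}) ∪ {e}) := by
        intro m hm
        rw [← convexHull_pair]
        apply convexHull_mono
        intro z hz
        simp only [Set.mem_insert_iff, Set.mem_singleton_iff] at hz
        rcases hz with rfl | rfl
        · exact Set.mem_union_left _ ⟨⟨l, rfl⟩, fun h =>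
            hm (hinj (Set.mem_singleton_iff.mp h)).symm⟩
        · exact Set.mem_union_right _ rfl
      exact ⟨⟨hkey i hil hy, hkey j hjl hy⟩, hkey k hkl hy⟩
  exact ⟨by rw [main, convexHull_pair], main⟩
end

section
/- Let v : Fin 4 → ℝ³ be an affinely independent family with Δ = convexHull ℝ (Set.range v), and let e be in the interior of Δ. Then the intersection of all four subtetrahedra of the refinement is exactly the singleton {e}: ⋂ i, Δᵢ = {e}. -/
/-- The intersection of all four subtetrahedra of the refinement of
Definition 1.1 is exactly the singleton `{e}`. -/
theorem refinement_total_intersection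
    (v : Fin 4 → EuclideanSpace ℝ (Fin 3)) (hv : AffineIndependent ℝ v)
    (e : EuclideanSpace ℝ (Fin 3))
    (he : e ∈ interior (convexHull ℝ (Set.range v))) :
    ⋂ i : Fin 4, convexHull ℝ ((Set.range v \ {v i}) ∪ {e}) = {e} := by
  classical
  have hcard : Fintype.card (Fin 4) = Module.finrank ℝ (EuclideanSpace ℝ (Fin 3)) + 1 := by
    simp [finrank_euclideanSpace]
  have htop : affineSpan ℝ (Set.range v) = ⊤ :=
    hv.affineSpan_eq_top_iff_card_eq_finrank_add_one.mpr hcard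
  let b : AffineBasis (Fin 4) ℝ (EuclideanSpace ℝ (Fin 3)) := ⟨v, hv, htop⟩
  have hbv : ⇑b = v := rfl
  have hc : ∀ k, 0 < b.coord k e := by
    have := b.interior_convexHull
    rw [hbv] at this
    rw [this] at he
    exact he
  have hone : ∀ k, b.coord k (v k) = 1 := fun k => b.coord_apply_eq k
  have hzero : ∀ k j : Fin 4, k ≠ j → b.coord k (v j) = 0 := fun k j h => b.coord_apply_ne h
  have hrange : ∀ i : Fin 4, (Set.range v \ {v i}) ∪ {e} = Set.range (Function.update v i e) := by
    intro i
    ext x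
    simp only [Set.mem_union, Set.mem_diff, Set.mem_singleton_iff, Set.mem_range]
    constructor
    · rintro (⟨⟨j, rfl⟩, hne⟩ | h)
      · exact ⟨j, Function.update_of_ne (fun h : j = i => hne (congrArg v h)) _ _⟩
      · exact ⟨i, by rw [Function.update_self]; exact h.symm⟩
    · rintro ⟨j, rfl⟩
      by_cases hj : j = i
      · subst hj; right; rw [Function.update_self]
      · left
        rw [Function.update_of_ne hj]
        exact ⟨⟨j, rfl⟩, fun h => hj (hv.injective h)⟩
  apply Set.Subset.antisymm
  · intro x hx
    simp only [Set.mem_iInter] at hx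
    -- key inequality
    have key : ∀ i k : Fin 4, b.coord i x * b.coord k e ≤ b.coord k x * b.coord i e := by
      intro i k
      have hxi := hx i
      rw [hrange i, convexHull_range_eq_exists_affineCombination] at hxi
      obtain ⟨s, w, hw0, hw1, hxw⟩ := hxi
      set A : ℝ := if i ∈ s then w i else 0 with hA
      have hA0 : 0 ≤ A := by
        rw [hA]; split
        · exact hw0 i ‹_›
        · exact le_rfl
      have hcoord : ∀ m : Fin 4, b.coord m x =
          ∑ j ∈ s, w j * b.coord m (Function.update v i e j) := by
        intro m
        rw [← hxw, Finset.map_affineCombination _ _ _ hw1,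
          Finset.affineCombination_eq_linear_combination _ _ _ hw1]
        simp [Function.comp]
      have hXi : b.coord i x = A * b.coord i e := by
        rw [hcoord i]
        have : ∀ j ∈ s, w j * b.coord i (Function.update v i e j) =
            if j = i then w j * b.coord i e else 0 := by
          intro j _
          by_cases hj : j = i
          · subst hj; simp [Function.update_self]
          · simp [hj, Function.update_of_ne hj, hzero i j (Ne.symm hj)]
        rw [Finset.sum_congr rfl this, Finset.sum_ite_eq' s i (fun j => w j * b.coord i e), hA]
        split <;> simp
      have hXk : A * b.coord k e ≤ b.coord k x := by
        rw [hcoord k]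
        have : ∀ j ∈ s, (if j = i then w j * b.coord k e else 0) ≤
            w j * b.coord k (Function.update v i e j) := by
          intro j hj
          by_cases hji : j = i
          · subst hji; simp [Function.update_self]
          · simp only [hji, if_false, Function.update_of_ne hji]
            have : 0 ≤ b.coord k (v j) := by
              by_cases hkj : k = j
              · subst hkj; rw [hone k]; norm_num
              · rw [hzero k j hkj]
            exact mul_nonneg (hw0 j hj) this
        calc A * b.coord k e = ∑ j ∈ s, if j = i then w j * b.coord k e else 0 := by
              rw [Finset.sum_ite_eq' s i (fun j => w j * b.coord k e), hA]
              split <;> simp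
          _ ≤ _ := Finset.sum_le_sum this
      calc b.coord i x * b.coord k e = (A * b.coord k e) * b.coord i e := by
            rw [hXi]; ring
        _ ≤ b.coord k x * b.coord i e :=
            mul_le_mul_of_nonneg_right hXk (le_of_lt (hc i))
    have keyeq : ∀ i k : Fin 4, b.coord i x * b.coord k e = b.coord k x * b.coord i e :=
      fun i k => le_antisymm (key i k) (key k i)
    have hXeq : ∀ i, b.coord i x = b.coord i e := by
      intro i
      have h1 : ∑ k : Fin 4, b.coord i x * b.coord k e = ∑ k : Fin 4, b.coord k x * b.coord i e :=
        Finset.sum_congr rfl fun k _ => keyeq i k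
      rw [← Finset.mul_sum, ← Finset.sum_mul, b.sum_coord_apply_eq_one,
        b.sum_coord_apply_eq_one, mul_one, one_mul] at h1
      exact h1
    exact b.ext_elem hXeq
  · intro x hx
    rw [Set.mem_singleton_iff] at hx
    subst hx
    exact Set.mem_iInter.mpr fun i => subset_convexHull ℝ _ (Set.mem_union_right _ rfl)
end

section
/- Let v : Fin 4 → ℝ³ be an affinely independent family with Δ = convexHull ℝ (Set.range v), and let e be in the interior of Δ. Then for all i ≠ j in Fin 4, the subtetrahedron Δᵢ meets the face of Δ opposite the vertex v j exactly in their common edge: Δᵢ ∩ convexHull ℝ (Set.range v \ {v j}) = convexHull ℝ (Set.range v \ {v i, v j}). -/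
open Set

/-- A subtetrahedron `Δᵢ` of the refinement of Definition 1.1 meets the face of
`Δ` opposite the vertex `v j` (for `j ≠ i`) exactly in their common edge. -/
theorem refinement_meets_face
    (v : Fin 4 → EuclideanSpace ℝ (Fin 3)) (hv : AffineIndependent ℝ v)
    (e : EuclideanSpace ℝ (Fin 3))
    (he : e ∈ interior (convexHull ℝ (Set.range v))) :
    ∀ i j : Fin 4, i ≠ j →
      convexHull ℝ ((Set.range v \ {v i}) ∪ {e}) ∩
        convexHull ℝ (Set.range v \ {v j}) =
      convexHull ℝ (Set.range v \ {v i, v j}) := by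
  classical
  have htop : affineSpan ℝ (Set.range v) = ⊤ := by
    rw [hv.affineSpan_eq_top_iff_card_eq_finrank_add_one]
    simp [finrank_euclideanSpace_fin]
  let b : AffineBasis (Fin 4) ℝ (EuclideanSpace ℝ (Fin 3)) := ⟨v, hv, htop⟩
  have hb : ⇑b = v := rfl
  have hε : ∀ k, 0 < b.coord k e := by
    rw [← hb] at he
    rw [b.interior_convexHull] at he
    exact he
  intro i j hij
  apply Set.Subset.antisymm
  · rintro x ⟨hx1, hx2⟩
    have hnonneg : ∀ k, 0 ≤ b.coord k x := by
      intro k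
      have hsub : convexHull ℝ (Set.range v \ {v j}) ⊆ {y | 0 ≤ b.coord k y} := by
        apply convexHull_min
        · rintro y ⟨⟨l, rfl⟩, -⟩
          simp only [Set.mem_setOf_eq, ← hb]
          rw [b.coord_apply]
          split <;> norm_num
        · exact (convex_Ici (0:ℝ)).affine_preimage (b.coord k)
      exact hsub hx2
    have hj0 : b.coord j x = 0 := by
      have hsub : convexHull ℝ (Set.range v \ {v j}) ⊆ {y | b.coord j y = 0} := by
        apply convexHull_min
        · rintro y ⟨⟨l, rfl⟩, hl⟩
          have hlj : l ≠ j := fun h => hl (by rw [h]; rfl)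
          rw [← hb]; exact b.coord_apply_ne (Ne.symm hlj)
        · exact (convex_singleton (0:ℝ)).affine_preimage (b.coord j)
      exact hsub hx2
    have hi0 : b.coord i x = 0 := by
      set f : EuclideanSpace ℝ (Fin 3) →ᵃ[ℝ] ℝ :=
        b.coord j e • b.coord i - b.coord i e • b.coord j with hf
      have hfx : f x ≤ 0 := by
        have hsub : convexHull ℝ ((Set.range v \ {v i}) ∪ {e}) ⊆ {y | f y ≤ 0} := by
          apply convexHull_min
          · rintro y (⟨⟨l, rfl⟩, hl⟩ | rfl)
            · have hli : l ≠ i := fun h => hl (by rw [h]; rfl)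
              have h0 : b.coord i (v l) = 0 := by
                rw [← hb]; exact b.coord_apply_ne (Ne.symm hli)
              have h1 : 0 ≤ b.coord j (v l) := by
                rw [← hb, b.coord_apply]; split <;> norm_num
              simp only [hf, AffineMap.coe_sub, AffineMap.coe_smul, Pi.sub_apply, Pi.smul_apply,
                smul_eq_mul, Set.mem_setOf_eq, h0, mul_zero, zero_sub, neg_nonpos]
              exact mul_nonneg (hε i).le h1
            · simp only [hf, AffineMap.coe_sub, AffineMap.coe_smul, Pi.sub_apply, Pi.smul_apply,
                smul_eq_mul, Set.mem_setOf_eq]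
              nlinarith [hε i, hε j]
          · exact (convex_Iic (0:ℝ)).affine_preimage f
        exact hsub hx1
      have hfx' : b.coord j e * b.coord i x - b.coord i e * b.coord j x ≤ 0 := by
        simpa [hf, AffineMap.coe_sub, AffineMap.coe_smul, smul_eq_mul] using hfx
      rw [hj0, mul_zero, sub_zero] at hfx'
      have h1 : b.coord i x ≤ 0 := by nlinarith [hε j]
      linarith [hnonneg i]
    -- now represent x as convex combination of the remaining two vertices
    set t : Finset (Fin 4) := Finset.univ.filter (fun k => k ≠ i ∧ k ≠ j) with ht
    have hzero : ∀ k ∈ Finset.univ.filter (fun k => ¬(k ≠ i ∧ k ≠ j)), b.coord k x = 0 := by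
      intro k hk
      simp only [Finset.mem_filter, not_and_or, not_ne_iff] at hk
      rcases hk.2 with rfl | rfl
      · exact hi0
      · exact hj0
    have hsum : ∑ k ∈ t, b.coord k x = 1 := by
      have := b.sum_coord_apply_eq_one x
      rw [← Finset.sum_filter_add_sum_filter_not Finset.univ (fun k => k ≠ i ∧ k ≠ j)
        (fun k => b.coord k x)] at this
      rw [Finset.sum_eq_zero hzero, add_zero] at this
      exact this
    have hxeq : ∑ k ∈ t, b.coord k x • v k = x := by
      have := b.linear_combination_coord_eq_self x
      rw [hb] at this
      rw [← Finset.sum_filter_add_sum_filter_not Finset.univ (fun k => k ≠ i ∧ k ≠ j)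
        (fun k => b.coord k x • v k)] at this
      have hz2 : ∑ k ∈ Finset.univ.filter (fun k => ¬(k ≠ i ∧ k ≠ j)),
          b.coord k x • v k = 0 :=
        Finset.sum_eq_zero fun k hk => by rw [hzero k hk, zero_smul]
      rw [hz2, add_zero] at this
      exact this
    rw [← hxeq]
    apply (convex_convexHull ℝ _).sum_mem (fun k _ => hnonneg k) hsum
    intro k hk
    simp only [ht, Finset.mem_filter] at hk
    apply subset_convexHull
    refine ⟨⟨k, rfl⟩, ?_⟩
    intro hmem
    rcases hmem with h | h
    · exact hk.2.1 (hv.injective h)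
    · exact hk.2.2 (hv.injective h)
  · apply Set.subset_inter
    · apply convexHull_mono
      intro y hy
      left
      exact ⟨hy.1, fun h => hy.2 (Or.inl h)⟩
    · apply convexHull_mono
      intro y hy
      exact ⟨hy.1, fun h => hy.2 (Or.inr h)⟩
end

section
/- Let p₀, p₁, p₂ ∈ ℝ² be affinely independent, vᵢ = (pᵢ, -1), wᵢ = (pᵢ, 1) in ℝ² × ℝ, and T = convexHull ℝ {p₀, p₁, p₂}. Then the prism T × [-1,1] (i.e., {(q,t) : q ∈ T, t ∈ Set.Icc (-1) 1}) equals the union of the three prism tetrahedra: T × [-1,1] = Δ₀ ∪ Δ₁ ∪ Δ₂. -/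
private lemma mem4 {E : Type*} [AddCommGroup E] [Module ℝ E] {s : Set E} (hs : Convex ℝ s)
    {x₀ x₁ x₂ x₃ : E} (h₀ : x₀ ∈ s) (h₁ : x₁ ∈ s) (h₂ : x₂ ∈ s) (h₃ : x₃ ∈ s)
    {c₀ c₁ c₂ c₃ : ℝ} (n₀ : 0 ≤ c₀) (n₁ : 0 ≤ c₁) (n₂ : 0 ≤ c₂) (n₃ : 0 ≤ c₃)
    (hsum : c₀ + c₁ + c₂ + c₃ = 1) :
    c₀ • x₀ + c₁ • x₁ + c₂ • x₂ + c₃ • x₃ ∈ s := by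
  have := hs.sum_mem (t := Finset.univ) (w := ![c₀, c₁, c₂, c₃]) (z := ![x₀, x₁, x₂, x₃])
    (fun i _ => by fin_cases i <;> assumption)
    (by simp [Fin.sum_univ_four, hsum])
    (fun i _ => by fin_cases i <;> assumption)
  simpa [Fin.sum_univ_four, add_assoc] using this

private lemma tri_coords {E : Type*} [AddCommGroup E] [Module ℝ E] (p₀ p₁ p₂ q : E)
    (hq : q ∈ convexHull ℝ ({p₀, p₁, p₂} : Set E)) :
    ∃ a₀ a₁ a₂ : ℝ, 0 ≤ a₀ ∧ 0 ≤ a₁ ∧ 0 ≤ a₂ ∧ a₀ + a₁ + a₂ = 1 ∧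
      q = a₀ • p₀ + a₁ • p₁ + a₂ • p₂ := by
  rw [show ({p₀, p₁, p₂} : Set E) = insert p₀ {p₁, p₂} from rfl,
    convexHull_insert ⟨p₁, by simp⟩, mem_convexJoin] at hq
  obtain ⟨a, ha, z, hz, hseg⟩ := hq
  rw [Set.mem_singleton_iff] at ha
  subst ha
  rw [convexHull_pair, segment_eq_image] at hz
  obtain ⟨u, hu, rfl⟩ := hz
  rw [Set.mem_Icc] at hu
  rw [segment_eq_image] at hseg
  obtain ⟨θ, hθ, hq⟩ := hseg
  rw [Set.mem_Icc] at hθ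
  refine ⟨1 - θ, θ * (1 - u), θ * u, by linarith [hθ.2], ?_, ?_, by ring, ?_⟩
  · exact mul_nonneg hθ.1 (by linarith [hu.2])
  · exact mul_nonneg hθ.1 hu.1
  · rw [← hq]; simp only [smul_add, smul_smul]; module

/-- The prism `T × [-1,1]` over a nondegenerate triangle `T ⊆ ℝ²` is the union
of the three tetrahedra of the prism triangulation (Section 3 of the paper). -/
theorem prism_triangulation_union
    (p₀ p₁ p₂ : EuclideanSpace ℝ (Fin 2))
    (hp : AffineIndependent ℝ ![p₀, p₁, p₂]) :
    (convexHull ℝ {p₀, p₁, p₂}) ×ˢ (Set.Icc (-1 : ℝ) 1) =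
      convexHull ℝ {((p₀, -1) : EuclideanSpace ℝ (Fin 2) × ℝ),
          (p₀, 1), (p₁, 1), (p₂, 1)} ∪
      convexHull ℝ {((p₀, -1) : EuclideanSpace ℝ (Fin 2) × ℝ),
          (p₁, -1), (p₁, 1), (p₂, 1)} ∪
      convexHull ℝ {((p₀, -1) : EuclideanSpace ℝ (Fin 2) × ℝ),
          (p₁, -1), (p₂, -1), (p₂, 1)} := by
  have hconv : Convex ℝ ((convexHull ℝ {p₀, p₁, p₂}) ×ˢ (Set.Icc (-1 : ℝ) 1)) :=
    (convex_convexHull ℝ _).prod (convex_Icc _ _)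
  have hmem : ∀ i : Fin 3, (![p₀, p₁, p₂] i) ∈ convexHull ℝ ({p₀, p₁, p₂} : Set _) := by
    intro i
    apply subset_convexHull
    fin_cases i <;> simp
  apply Set.Subset.antisymm
  · rintro ⟨q, t⟩ ⟨hq, ht⟩
    rw [Set.mem_Icc] at ht
    obtain ⟨a₀, a₁, a₂, hc, ha₁0, ha₂0, hsum, hqeq⟩ := tri_coords p₀ p₁ p₂ q hq
    set s : ℝ := (1 - t) / 2 with hs
    have hs0 : 0 ≤ s := by simp only [hs]; linarith
    have hs1 : s ≤ 1 := by simp only [hs]; linarith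
    rcases le_or_gt s a₀ with h1 | h1
    · left; left
      have key : ((q, t) : EuclideanSpace ℝ (Fin 2) × ℝ) =
          s • ((p₀, -1) : EuclideanSpace ℝ (Fin 2) × ℝ) + (a₀ - s) • (p₀, 1)
          + a₁ • (p₁, 1) + a₂ • (p₂, 1) := by
        rw [Prod.ext_iff]
        constructor
        · simp only [Prod.fst_add, Prod.smul_fst, hqeq]; module
        · simp only [Prod.snd_add, Prod.smul_snd, smul_eq_mul, hs]; ring_nf <;> linarith
      rw [key]
      exact mem4 (convex_convexHull ℝ _)
        (subset_convexHull ℝ _ (by simp)) (subset_convexHull ℝ _ (by simp))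
        (subset_convexHull ℝ _ (by simp)) (subset_convexHull ℝ _ (by simp))
        hs0 (by linarith) ha₁0 ha₂0 (by linarith)
    · rcases le_or_gt s (a₀ + a₁) with h2 | h2
      · left; right
        have key : ((q, t) : EuclideanSpace ℝ (Fin 2) × ℝ) =
            a₀ • ((p₀, -1) : EuclideanSpace ℝ (Fin 2) × ℝ) + (s - a₀) • (p₁, -1)
            + (a₀ + a₁ - s) • (p₁, 1) + a₂ • (p₂, 1) := by
          rw [Prod.ext_iff]
          constructor
          · simp only [Prod.fst_add, Prod.smul_fst, hqeq]; module
          · simp only [Prod.snd_add, Prod.smul_snd, smul_eq_mul, hs]; ring_nf <;> linarith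
        rw [key]
        exact mem4 (convex_convexHull ℝ _)
          (subset_convexHull ℝ _ (by simp)) (subset_convexHull ℝ _ (by simp))
          (subset_convexHull ℝ _ (by simp)) (subset_convexHull ℝ _ (by simp))
          hc (by linarith) (by linarith) ha₂0 (by linarith)
      · right
        have key : ((q, t) : EuclideanSpace ℝ (Fin 2) × ℝ) =
            a₀ • ((p₀, -1) : EuclideanSpace ℝ (Fin 2) × ℝ) + a₁ • (p₁, -1)
            + (s - a₀ - a₁) • (p₂, -1) + (1 - s) • (p₂, 1) := by
          rw [Prod.ext_iff]
          constructor
          · simp only [Prod.fst_add, Prod.smul_fst, hqeq]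
            have : a₂ = (s - a₀ - a₁) + (1 - s) := by linarith
            rw [this]; module
          · simp only [Prod.snd_add, Prod.smul_snd, smul_eq_mul, hs]; ring_nf <;> linarith
        rw [key]
        exact mem4 (convex_convexHull ℝ _)
          (subset_convexHull ℝ _ (by simp)) (subset_convexHull ℝ _ (by simp))
          (subset_convexHull ℝ _ (by simp)) (subset_convexHull ℝ _ (by simp))
          hc ha₁0 (by linarith) (by linarith) (by ring)
  · refine Set.union_subset (Set.union_subset ?_ ?_) ?_ <;>
      refine convexHull_min ?_ hconv <;>
      · intro x hx
        simp only [Set.mem_insert_iff, Set.mem_singleton_iff] at hx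
        rcases hx with rfl | rfl | rfl | rfl <;>
          exact ⟨by first
            | exact hmem 0 | exact hmem 1 | exact hmem 2, by norm_num⟩
end

section
/- Let p₀, p₁, p₂ ∈ ℝ² be affinely independent, vᵢ = (pᵢ, -1), wᵢ = (pᵢ, 1). Then the three tetrahedra Δ₀, Δ₁, Δ₂ of the prism triangulation have pairwise disjoint topological interiors: interior Δ₀ ∩ interior Δ₁ = ∅, interior Δ₁ ∩ interior Δ₂ = ∅, and interior Δ₀ ∩ interior Δ₂ = ∅. -/
private lemma sep_aux {E : Type*} [NormedAddCommGroup E] [NormedSpace ℝ E]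
    (f : E →ᵃ[ℝ] ℝ) (A B : Set E)
    (hA : A ⊆ {x | 0 ≤ f x}) (hB : B ⊆ {x | f x ≤ 0})
    (u : E) (hu : f.linear u = 1) :
    interior A ∩ interior B = ∅ := by
  by_contra h
  obtain ⟨x, hxA, hxB⟩ := Set.nonempty_iff_ne_empty.2 h
  obtain ⟨ε, hε, hball⟩ := Metric.isOpen_iff.1 isOpen_interior x hxB
  set δ : ℝ := ε / (‖u‖ + 1) with hδ
  have hδpos : 0 < δ := div_pos hε (by positivity)
  have hmem : x + δ • u ∈ interior B := by
    apply hball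
    rw [Metric.mem_ball, dist_eq_norm]
    have : x + δ • u - x = δ • u := by abel
    rw [this, norm_smul, Real.norm_eq_abs, abs_of_pos hδpos]
    calc δ * ‖u‖ < δ * (‖u‖ + 1) := by nlinarith
    _ = ε := by rw [hδ, div_mul_cancel₀ ε (by positivity : ‖u‖ + 1 ≠ 0)]
  have h1 : f (x + δ • u) ≤ 0 := hB (interior_subset hmem)
  have h2 : 0 ≤ f x := hA (interior_subset hxA)
  have h3 : f (x + δ • u) = f x + δ := by
    have := f.map_vadd x (δ • u)
    simp only [vadd_eq_add, add_comm] at this ⊢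
    rw [this, map_smul, hu]
    simp [add_comm]
  linarith

/-- The three tetrahedra `Δ₀, Δ₁, Δ₂` of the prism triangulation of
`T × [-1,1]` (Section 3 of the paper) have pairwise disjoint topological
interiors. -/
theorem prism_triangulation_interiors_disjoint
    (p₀ p₁ p₂ : EuclideanSpace ℝ (Fin 2))
    (hp : AffineIndependent ℝ ![p₀, p₁, p₂]) :
    interior (convexHull ℝ {((p₀, -1) : EuclideanSpace ℝ (Fin 2) × ℝ),
        (p₀, 1), (p₁, 1), (p₂, 1)}) ∩
      interior (convexHull ℝ {((p₀, -1) : EuclideanSpace ℝ (Fin 2) × ℝ),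
        (p₁, -1), (p₁, 1), (p₂, 1)}) = ∅ ∧
    interior (convexHull ℝ {((p₀, -1) : EuclideanSpace ℝ (Fin 2) × ℝ),
        (p₁, -1), (p₁, 1), (p₂, 1)}) ∩
      interior (convexHull ℝ {((p₀, -1) : EuclideanSpace ℝ (Fin 2) × ℝ),
        (p₁, -1), (p₂, -1), (p₂, 1)}) = ∅ ∧
    interior (convexHull ℝ {((p₀, -1) : EuclideanSpace ℝ (Fin 2) × ℝ),
        (p₀, 1), (p₁, 1), (p₂, 1)}) ∩
      interior (convexHull ℝ {((p₀, -1) : EuclideanSpace ℝ (Fin 2) × ℝ),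
        (p₁, -1), (p₂, -1), (p₂, 1)}) = ∅ := by
  letI E := EuclideanSpace ℝ (Fin 2)
  -- affine basis
  have htot : affineSpan ℝ (Set.range ![p₀, p₁, p₂]) = ⊤ := by
    rw [hp.affineSpan_eq_top_iff_card_eq_finrank_add_one]
    simp
  let b : AffineBasis (Fin 3) ℝ E := ⟨![p₀, p₁, p₂], hp, htot⟩
  have hb : ∀ i, b i = ![p₀, p₁, p₂] i := fun i => rfl
  -- coordinate affine maps on E × ℝ
  let c : Fin 3 → ((E × ℝ) →ᵃ[ℝ] ℝ) := fun i => (b.coord i).comp (AffineMap.fst)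
  have hc : ∀ i j t, c i (![p₀, p₁, p₂] j, t) = if i = j then 1 else 0 := by
    intro i j t
    show b.coord i (![p₀, p₁, p₂] j) = _
    rw [← hb j, b.coord_apply]
  let s : (E × ℝ) →ᵃ[ℝ] ℝ := AffineMap.snd
  -- the three separating functionals
  let f₁ : (E × ℝ) →ᵃ[ℝ] ℝ := (2:ℝ) • c 0 + s + AffineMap.const ℝ (E × ℝ) (-1)
  let f₂ : (E × ℝ) →ᵃ[ℝ] ℝ := s + AffineMap.const ℝ (E × ℝ) 1 - (2:ℝ) • c 2
  let f₃ : (E × ℝ) →ᵃ[ℝ] ℝ := s + AffineMap.const ℝ (E × ℝ) 1 - c 1 - (2:ℝ) • c 2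
  have hf₁ : ∀ j t, f₁ (![p₀, p₁, p₂] j, t) = 2 * (if (0:Fin 3) = j then 1 else 0) + t - 1 := by
    intro j t; simp [f₁, s, hc, AffineMap.snd]; rfl
  have hf₂ : ∀ j t, f₂ (![p₀, p₁, p₂] j, t) = t + 1 - 2 * (if (2:Fin 3) = j then 1 else 0) := by
    intro j t; simp [f₂, s, hc, AffineMap.snd]; rfl
  have hf₃ : ∀ j t, f₃ (![p₀, p₁, p₂] j, t) = t + 1 - (if (1:Fin 3) = j then 1 else 0)
      - 2 * (if (2:Fin 3) = j then 1 else 0) := by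
    intro j t; simp [f₃, s, hc, AffineMap.snd]; rfl
  -- hull containment helper
  have hull_le : ∀ (f : (E × ℝ) →ᵃ[ℝ] ℝ) (S : Set (E × ℝ)), (∀ x ∈ S, 0 ≤ f x) →
      convexHull ℝ S ⊆ {x | 0 ≤ f x} := by
    intro f S hS
    exact convexHull_min hS ((convex_Ici 0).affine_preimage f)
  have hull_le' : ∀ (f : (E × ℝ) →ᵃ[ℝ] ℝ) (S : Set (E × ℝ)), (∀ x ∈ S, f x ≤ 0) →
      convexHull ℝ S ⊆ {x | f x ≤ 0} := by
    intro f S hS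
    exact convexHull_min hS ((convex_Iic 0).affine_preimage f)
  have h0 : p₀ = ![p₀, p₁, p₂] 0 := rfl
  have h1 : p₁ = ![p₀, p₁, p₂] 1 := rfl
  have h2 : p₂ = ![p₀, p₁, p₂] 2 := rfl
  refine ⟨?_, ?_, ?_⟩
  · apply sep_aux f₁ _ _
      (hull_le f₁ _ ?_) (hull_le' f₁ _ ?_) ((0 : E), 1) ?_
    · rintro x (rfl|rfl|rfl|rfl)
      · rw [h0, hf₁]; norm_num [Fin.ext_iff]
      · rw [h0, hf₁]; norm_num [Fin.ext_iff]
      · rw [h1, hf₁]; norm_num [Fin.ext_iff]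
      · rw [h2, hf₁]; norm_num [Fin.ext_iff]
    · rintro x (rfl|rfl|rfl|rfl)
      · rw [h0, hf₁]; norm_num [Fin.ext_iff]
      · rw [h1, hf₁]; norm_num [Fin.ext_iff]
      · rw [h1, hf₁]; norm_num [Fin.ext_iff]
      · rw [h2, hf₁]; norm_num [Fin.ext_iff]
    · simp [f₁, c, s, AffineMap.comp]
  · apply sep_aux f₂ _ _
      (hull_le f₂ _ ?_) (hull_le' f₂ _ ?_) ((0 : E), 1) ?_
    · rintro x (rfl|rfl|rfl|rfl)
      · rw [h0, hf₂]; norm_num [Fin.ext_iff]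
      · rw [h1, hf₂]; norm_num [Fin.ext_iff]
      · rw [h1, hf₂]; norm_num [Fin.ext_iff]
      · rw [h2, hf₂]; norm_num [Fin.ext_iff]
    · rintro x (rfl|rfl|rfl|rfl)
      · rw [h0, hf₂]; norm_num [Fin.ext_iff]
      · rw [h1, hf₂]; norm_num [Fin.ext_iff]
      · rw [h2, hf₂]; norm_num [Fin.ext_iff]
      · rw [h2, hf₂]; norm_num [Fin.ext_iff]
    · simp [f₂, c, s, AffineMap.comp]
  · apply sep_aux f₃ _ _
      (hull_le f₃ _ ?_) (hull_le' f₃ _ ?_) ((0 : E), 1) ?_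
    · rintro x (rfl|rfl|rfl|rfl)
      · rw [h0, hf₃]; norm_num [Fin.ext_iff]
      · rw [h0, hf₃]; norm_num [Fin.ext_iff]
      · rw [h1, hf₃]; norm_num [Fin.ext_iff]
      · rw [h2, hf₃]; norm_num [Fin.ext_iff]
    · rintro x (rfl|rfl|rfl|rfl)
      · rw [h0, hf₃]; norm_num [Fin.ext_iff]
      · rw [h1, hf₃]; norm_num [Fin.ext_iff]
      · rw [h2, hf₃]; norm_num [Fin.ext_iff]
      · rw [h2, hf₃]; norm_num [Fin.ext_iff]
    · simp [f₃, c, s, AffineMap.comp]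
end

section
/- Let p₀, p₁, p₂ ∈ ℝ² be affinely independent, vᵢ = (pᵢ, -1), wᵢ = (pᵢ, 1). Then the tetrahedra of the prism triangulation intersect exactly in common faces: Δ₀ ∩ Δ₁ = convexHull ℝ {v₀, w₁, w₂}, Δ₁ ∩ Δ₂ = convexHull ℝ {v₀, v₁, w₂}, and Δ₀ ∩ Δ₂ = convexHull ℝ {v₀, w₂} = segment ℝ v₀ w₂. -/
open Finset

section helpers
variable {E : Type*} [AddCommGroup E] [Module ℝ E]

lemma mem_hull_range_iff {n : ℕ} {v : Fin n → E} {x : E} :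
    x ∈ convexHull ℝ (Set.range v) ↔
      ∃ w : Fin n → ℝ, (∀ i, 0 ≤ w i) ∧ ∑ i, w i = 1 ∧ ∑ i, w i • v i = x := by
  constructor
  · rw [convexHull_range_eq_exists_affineCombination]
    rintro ⟨s, w, h0, h1, rfl⟩
    refine ⟨fun i => if i ∈ s then w i else 0,
      fun i => by by_cases hi : i ∈ s <;> simp [hi, h0 i], ?_, ?_⟩
    · rw [Finset.sum_ite_mem, Finset.univ_inter, h1]
    · rw [s.affineCombination_eq_linear_combination v w h1]
      rw [Finset.sum_congr rfl (fun i _ => by rw [ite_smul, zero_smul]),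
        Finset.sum_ite_mem, Finset.univ_inter]
  · rintro ⟨w, h0, h1, hx⟩
    exact mem_convexHull_of_exists_fintype w v h0 h1 (fun i => Set.mem_range_self i) hx

lemma mem_hull4_iff {a b c d x : E} :
    x ∈ convexHull ℝ ({a, b, c, d} : Set E) ↔
      ∃ α β γ δ : ℝ, 0 ≤ α ∧ 0 ≤ β ∧ 0 ≤ γ ∧ 0 ≤ δ ∧ α + β + γ + δ = 1 ∧
        α • a + β • b + γ • c + δ • d = x := by
  have hr : ({a, b, c, d} : Set E) = Set.range ![a, b, c, d] := by
    rw [Matrix.range_cons, Matrix.range_cons, Matrix.range_cons, Matrix.range_cons_empty]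
    simp only [Set.singleton_union]
  rw [hr, mem_hull_range_iff]
  constructor
  · rintro ⟨w, h0, h1, hx⟩
    exact ⟨w 0, w 1, w 2, w 3, h0 0, h0 1, h0 2, h0 3,
      by simpa [Fin.sum_univ_four] using h1, by simpa [Fin.sum_univ_four] using hx⟩
  · rintro ⟨α, β, γ, δ, h0, h1, h2, h3, hs, hx⟩
    refine ⟨![α, β, γ, δ], ?_, ?_, ?_⟩
    · intro i; fin_cases i <;> assumption
    · simpa [Fin.sum_univ_four] using hs
    · simpa [Fin.sum_univ_four] using hx

lemma mem_hull3_iff {a b c x : E} :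
    x ∈ convexHull ℝ ({a, b, c} : Set E) ↔
      ∃ α β γ : ℝ, 0 ≤ α ∧ 0 ≤ β ∧ 0 ≤ γ ∧ α + β + γ = 1 ∧
        α • a + β • b + γ • c = x := by
  have hr : ({a, b, c} : Set E) = {a, b, c, c} := by rw [Set.pair_eq_singleton]
  rw [hr, mem_hull4_iff]
  constructor
  · rintro ⟨α, β, γ, δ, h0, h1, h2, h3, hs, hx⟩
    exact ⟨α, β, γ + δ, h0, h1, by linarith, by linarith, by rw [← hx]; module⟩
  · rintro ⟨α, β, γ, h0, h1, h2, hs, hx⟩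
    exact ⟨α, β, γ, 0, h0, h1, h2, le_refl 0, by linarith, by rw [← hx]; module⟩

end helpers

/-- The tetrahedra of the prism triangulation of `T × [-1,1]` (Section 3 of
the paper) intersect exactly in common faces: `Δ₀ ∩ Δ₁` is the triangle
`[v₀, w₁, w₂]`, `Δ₁ ∩ Δ₂` is the triangle `[v₀, v₁, w₂]`, and `Δ₀ ∩ Δ₂` is
the edge `[v₀, w₂]`. -/
theorem prism_triangulation_common_faces
    (p₀ p₁ p₂ : EuclideanSpace ℝ (Fin 2))
    (hp : AffineIndependent ℝ ![p₀, p₁, p₂]) :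
    convexHull ℝ {((p₀, -1) : EuclideanSpace ℝ (Fin 2) × ℝ),
        (p₀, 1), (p₁, 1), (p₂, 1)} ∩
      convexHull ℝ {((p₀, -1) : EuclideanSpace ℝ (Fin 2) × ℝ),
        (p₁, -1), (p₁, 1), (p₂, 1)} =
      convexHull ℝ {((p₀, -1) : EuclideanSpace ℝ (Fin 2) × ℝ), (p₁, 1), (p₂, 1)} ∧
    convexHull ℝ {((p₀, -1) : EuclideanSpace ℝ (Fin 2) × ℝ),
        (p₁, -1), (p₁, 1), (p₂, 1)} ∩
      convexHull ℝ {((p₀, -1) : EuclideanSpace ℝ (Fin 2) × ℝ),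
        (p₁, -1), (p₂, -1), (p₂, 1)} =
      convexHull ℝ {((p₀, -1) : EuclideanSpace ℝ (Fin 2) × ℝ), (p₁, -1), (p₂, 1)} ∧
    convexHull ℝ {((p₀, -1) : EuclideanSpace ℝ (Fin 2) × ℝ),
        (p₀, 1), (p₁, 1), (p₂, 1)} ∩
      convexHull ℝ {((p₀, -1) : EuclideanSpace ℝ (Fin 2) × ℝ),
        (p₁, -1), (p₂, -1), (p₂, 1)} =
      convexHull ℝ {((p₀, -1) : EuclideanSpace ℝ (Fin 2) × ℝ), (p₂, 1)} ∧
    convexHull ℝ {((p₀, -1) : EuclideanSpace ℝ (Fin 2) × ℝ), (p₂, 1)} =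
      segment ℝ ((p₀, -1) : EuclideanSpace ℝ (Fin 2) × ℝ) (p₂, 1) := by
  have key : ∀ x y z : ℝ, x + y + z = 0 → x • p₀ + y • p₁ + z • p₂ = 0 →
      x = 0 ∧ y = 0 ∧ z = 0 := by
    intro x y z hs hc
    have h := affineIndependent_iff.1 hp Finset.univ ![x, y, z]
      (by simp [Fin.sum_univ_three]; linarith)
      (by simpa [Fin.sum_univ_three] using hc)
    exact ⟨by simpa using h 0 (Finset.mem_univ _), by simpa using h 1 (Finset.mem_univ _),
      by simpa using h 2 (Finset.mem_univ _)⟩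
  refine ⟨?_, ?_, ?_, convexHull_pair _ _⟩
  · -- Δ₀ ∩ Δ₁ = [v₀, w₁, w₂]
    apply Set.Subset.antisymm
    · rintro x ⟨hA, hB⟩
      rw [mem_hull4_iff] at hA hB
      obtain ⟨c, d₀, d₁, d₂, hc, hd₀, hd₁, hd₂, hsA, hxA⟩ := hA
      obtain ⟨e₀, e₁, f₁, f₂, he₀, he₁, hf₁, hf₂, hsB, hxB⟩ := hB
      have hA1 := congrArg Prod.fst hxA
      have hA2 := congrArg Prod.snd hxA
      have hB1 := congrArg Prod.fst hxB
      have hB2 := congrArg Prod.snd hxB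
      simp only [Prod.fst_add, Prod.snd_add, Prod.smul_fst, Prod.smul_snd,
        smul_eq_mul, mul_one, mul_neg] at hA1 hA2 hB1 hB2
      have hz : ((c + d₀) - e₀) • p₀ + (d₁ - (e₁ + f₁)) • p₁ + (d₂ - f₂) • p₂ = 0 := by
        have h := sub_eq_zero.2 (hA1.trans hB1.symm)
        rw [← h]; module
      obtain ⟨k1, k2, k3⟩ := key _ _ _ (by linarith) hz
      have he1 : e₁ = 0 := by linarith
      rw [mem_hull3_iff]
      exact ⟨e₀, f₁, f₂, he₀, hf₁, hf₂, by linarith, by rw [← hxB, he1]; module⟩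
    · refine Set.subset_inter (convexHull_mono ?_) (convexHull_mono ?_) <;>
        · intro y hy
          simp only [Set.mem_insert_iff, Set.mem_singleton_iff] at hy ⊢
          tauto
  · -- Δ₁ ∩ Δ₂ = [v₀, v₁, w₂]
    apply Set.Subset.antisymm
    · rintro x ⟨hA, hB⟩
      rw [mem_hull4_iff] at hA hB
      obtain ⟨e₀, e₁, f₁, f₂, he₀, he₁, hf₁, hf₂, hsA, hxA⟩ := hA
      obtain ⟨g₀, g₁, g₂, h₂, hg₀, hg₁, hg₂, hh₂, hsB, hxB⟩ := hB
      have hA1 := congrArg Prod.fst hxA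
      have hA2 := congrArg Prod.snd hxA
      have hB1 := congrArg Prod.fst hxB
      have hB2 := congrArg Prod.snd hxB
      simp only [Prod.fst_add, Prod.snd_add, Prod.smul_fst, Prod.smul_snd,
        smul_eq_mul, mul_one, mul_neg] at hA1 hA2 hB1 hB2
      have hz : (e₀ - g₀) • p₀ + ((e₁ + f₁) - g₁) • p₁ + (f₂ - (g₂ + h₂)) • p₂ = 0 := by
        have h := sub_eq_zero.2 (hA1.trans hB1.symm)
        rw [← h]; module
      obtain ⟨k1, k2, k3⟩ := key _ _ _ (by linarith) hz
      have hf1 : f₁ = 0 := by linarith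
      rw [mem_hull3_iff]
      exact ⟨e₀, e₁, f₂, he₀, he₁, hf₂, by linarith, by rw [← hxA, hf1]; module⟩
    · refine Set.subset_inter (convexHull_mono ?_) (convexHull_mono ?_) <;>
        · intro y hy
          simp only [Set.mem_insert_iff, Set.mem_singleton_iff] at hy ⊢
          tauto
  · -- Δ₀ ∩ Δ₂ = [v₀, w₂]
    apply Set.Subset.antisymm
    · rintro x ⟨hA, hB⟩
      rw [mem_hull4_iff] at hA hB
      obtain ⟨c, d₀, d₁, d₂, hc, hd₀, hd₁, hd₂, hsA, hxA⟩ := hA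
      obtain ⟨g₀, g₁, g₂, h₂, hg₀, hg₁, hg₂, hh₂, hsB, hxB⟩ := hB
      have hA1 := congrArg Prod.fst hxA
      have hA2 := congrArg Prod.snd hxA
      have hB1 := congrArg Prod.fst hxB
      have hB2 := congrArg Prod.snd hxB
      simp only [Prod.fst_add, Prod.snd_add, Prod.smul_fst, Prod.smul_snd,
        smul_eq_mul, mul_one, mul_neg] at hA1 hA2 hB1 hB2
      have hz : ((c + d₀) - g₀) • p₀ + (d₁ - g₁) • p₁ + (d₂ - (g₂ + h₂)) • p₂ = 0 := by
        have h := sub_eq_zero.2 (hA1.trans hB1.symm)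
        rw [← h]; module
      obtain ⟨k1, k2, k3⟩ := key _ _ _ (by linarith) hz
      have hd0 : d₀ = 0 := by linarith
      have hd1 : d₁ = 0 := by linarith
      rw [convexHull_pair]
      exact ⟨c, d₂, hc, hd₂, by linarith, by rw [← hxA, hd0, hd1]; module⟩
    · refine Set.subset_inter (convexHull_mono ?_) (convexHull_mono ?_) <;>
        · intro y hy
          simp only [Set.mem_insert_iff, Set.mem_singleton_iff] at hy ⊢
          tauto
end

section
/- Let p₀, p₁, p₂, p₃ ∈ ℝ² with (p₀,p₁,p₂) affinely independent, (p₁,p₂,p₃) affinely independent, and convexHull ℝ {p₀,p₁,p₂} ∩ convexHull ℝ {p₁,p₂,p₃} = convexHull ℝ {p₁,p₂} (the two triangles T₁, T₂ meet exactly in the common edge). Set vᵢ = (pᵢ,-1), wᵢ = (pᵢ,1), and consider the six tetrahedra A₀ = conv{v₀,w₀,w₁,w₂}, A₁ = conv{v₀,v₁,w₁,w₂}, A₂ = conv{v₀,v₁,v₂,w₂} (the prism triangulation of T₁ × [-1,1]) and B₀ = conv{v₁,w₁,w₂,w₃}, B₁ = conv{v₁,v₂,w₂,w₃}, B₂ =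 conv{v₁,v₂,v₃,w₃} (the prism triangulation of T₂ × [-1,1]). Then the union of the six tetrahedra equals (T₁ ∪ T₂) × [-1,1], and the six tetrahedra have pairwise disjoint topological interiors. -/
namespace PrismGlue

open Set

abbrev E2 : Type := EuclideanSpace ℝ (Fin 2)
abbrev P3 : Type := E2 × ℝ

/-- A point given as an explicit convex combination of four points lies in their hull. -/
lemma mem_hull4 {V : Type*} [AddCommGroup V] [Module ℝ V] {x a b c d : V} {wa wb wc wd : ℝ}
    (ha : 0 ≤ wa) (hb : 0 ≤ wb) (hc : 0 ≤ wc) (hd : 0 ≤ wd)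
    (hsum : wa + wb + wc + wd = 1)
    (hx : x = wa • a + wb • b + wc • c + wd • d) :
    x ∈ convexHull ℝ ({a, b, c, d} : Set V) := by
  have hws : (0:ℝ) < ∑ i : Fin 4, ![wa,wb,wc,wd] i := by
    simp [Fin.sum_univ_four]; linarith
  have hmem := Finset.centerMass_mem_convexHull (Finset.univ : Finset (Fin 4))
    (w := ![wa,wb,wc,wd]) (z := ![a,b,c,d]) (s := ({a,b,c,d} : Set V))
    (fun i _ => by fin_cases i <;> assumption) hws
    (fun i _ => by fin_cases i <;> simp)
  have h2 : (Finset.univ : Finset (Fin 4)).centerMass ![wa,wb,wc,wd] ![a,b,c,d] = x := by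
    rw [Finset.centerMass_eq_of_sum_1 _ _ (by simp [Fin.sum_univ_four]; linarith)]
    rw [Fin.sum_univ_four, hx]
    simp [add_assoc]
  rwa [h2] at hmem

lemma mem_hull3 {V : Type*} [AddCommGroup V] [Module ℝ V] {x a b c : V} {wa wb wc : ℝ}
    (ha : 0 ≤ wa) (hb : 0 ≤ wb) (hc : 0 ≤ wc)
    (hsum : wa + wb + wc = 1)
    (hx : x = wa • a + wb • b + wc • c) :
    x ∈ convexHull ℝ ({a, b, c} : Set V) := by
  have hws : (0:ℝ) < ∑ i : Fin 3, ![wa,wb,wc] i := by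
    simp [Fin.sum_univ_three]; linarith
  have hmem := Finset.centerMass_mem_convexHull (Finset.univ : Finset (Fin 3))
    (w := ![wa,wb,wc]) (z := ![a,b,c]) (s := ({a,b,c} : Set V))
    (fun i _ => by fin_cases i <;> assumption) hws
    (fun i _ => by fin_cases i <;> simp)
  have h2 : (Finset.univ : Finset (Fin 3)).centerMass ![wa,wb,wc] ![a,b,c] = x := by
    rw [Finset.centerMass_eq_of_sum_1 _ _ (by simp [Fin.sum_univ_three]; linarith)]
    rw [Fin.sum_univ_three, hx]
    simp [add_assoc]
  rwa [h2] at hmem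

lemma hull_subset_le {V : Type*} [AddCommGroup V] [Module ℝ V]
    (f : V →ᵃ[ℝ] ℝ) {S : Set V} (h : ∀ v ∈ S, f v ≤ 0) :
    convexHull ℝ S ⊆ {x | f x ≤ 0} :=
  convexHull_min h ((convex_Iic (0:ℝ)).affine_preimage f)

lemma hull_subset_ge {V : Type*} [AddCommGroup V] [Module ℝ V]
    (f : V →ᵃ[ℝ] ℝ) {S : Set V} (h : ∀ v ∈ S, 0 ≤ f v) :
    convexHull ℝ S ⊆ {x | 0 ≤ f x} :=
  convexHull_min h ((convex_Ici (0:ℝ)).affine_preimage f)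

/-- A nonempty open set cannot lie in a level set of a nonconstant affine function. -/
lemma open_subset_level_empty {V : Type*} [NormedAddCommGroup V] [NormedSpace ℝ V]
    (f : V →ᵃ[ℝ] ℝ) {a b : V} (hab : f a ≠ f b) {c : ℝ} {U : Set V}
    (hU : IsOpen U) (hsub : U ⊆ {x | f x = c}) : U = ∅ := by
  rw [Set.eq_empty_iff_forall_notMem]
  intro x hx
  have hd : f.linear (b - a) ≠ 0 := by
    intro h0
    apply hab
    have hv := f.map_vadd a (b - a)
    rw [h0] at hv
    simpa [vadd_eq_add, sub_add_cancel] using hv.symm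
  have hcont : Continuous fun t : ℝ => x + t • (b - a) :=
    continuous_const.add (continuous_id.smul continuous_const)
  have hopen : IsOpen ((fun t : ℝ => x + t • (b - a)) ⁻¹' U) := hU.preimage hcont
  have h0 : (0:ℝ) ∈ ((fun t : ℝ => x + t • (b - a)) ⁻¹' U) := by
    simp [hx]
  obtain ⟨ε, hε, hball⟩ := Metric.isOpen_iff.1 hopen 0 h0
  have hmem : (ε/2) ∈ Metric.ball (0:ℝ) ε := by
    simp only [Metric.mem_ball, Real.dist_eq, sub_zero]
    rw [abs_of_pos (by linarith)]; linarith
  have h1 : f (x + (ε/2) • (b - a)) = c := hsub (hball hmem)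
  have h2 : f (x + (ε/2) • (b - a)) = f x + (ε/2) * f.linear (b - a) := by
    have hv := f.map_vadd x ((ε/2) • (b - a))
    rw [map_smul] at hv
    simpa [vadd_eq_add, smul_eq_mul, add_comm] using hv
  have hfx : f x = c := hsub hx
  rw [h2, hfx] at h1
  have hz : (ε/2) * f.linear (b - a) = 0 := by linarith
  rcases mul_eq_zero.1 hz with h | h
  · linarith
  · exact hd h

/-- If `S` and `T` lie in opposite halfspaces of a nonconstant affine functional,
their interiors are disjoint. -/
lemma interior_inter_empty {V : Type*} [NormedAddCommGroup V] [NormedSpace ℝ V]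
    (f : V →ᵃ[ℝ] ℝ) {a b : V} (hab : f a ≠ f b) {S T : Set V}
    (hS : S ⊆ {x | f x ≤ 0}) (hT : T ⊆ {x | 0 ≤ f x}) :
    interior S ∩ interior T = ∅ := by
  apply open_subset_level_empty f hab (c := 0) (isOpen_interior.inter isOpen_interior)
  rintro x ⟨hx1, hx2⟩
  exact le_antisymm (hS (interior_subset hx1)) (hT (interior_subset hx2))

noncomputable def triBasis (q₀ q₁ q₂ : E2) (h : AffineIndependent ℝ ![q₀, q₁, q₂]) :
    AffineBasis (Fin 3) ℝ E2 :=
  ⟨![q₀, q₁, q₂], h, by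
    rw [h.affineSpan_eq_top_iff_card_eq_finrank_add_one]
    simp [finrank_euclideanSpace_fin]⟩

lemma triBasis_apply (q₀ q₁ q₂ : E2) (h : AffineIndependent ℝ ![q₀, q₁, q₂]) (i : Fin 3) :
    (triBasis q₀ q₁ q₂ h) i = ![q₀,q₁,q₂] i := rfl

section Coord

variable {q₀ q₁ q₂ : E2} (h : AffineIndependent ℝ ![q₀, q₁, q₂])

lemma coord_val (i j : Fin 3) :
    (triBasis q₀ q₁ q₂ h).coord i (![q₀,q₁,q₂] j) = if i = j then 1 else 0 := by
  classical
  have := (triBasis q₀ q₁ q₂ h).coord_apply (i := i) (j := j)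
  rwa [triBasis_apply] at this

lemma coord_nonneg {x : E2} (hx : x ∈ convexHull ℝ ({q₀, q₁, q₂} : Set E2)) (i : Fin 3) :
    0 ≤ (triBasis q₀ q₁ q₂ h).coord i x := by
  have hj : ∀ j : Fin 3, (0:ℝ) ≤ (triBasis q₀ q₁ q₂ h).coord i (![q₀,q₁,q₂] j) := by
    intro j; rw [coord_val]; split <;> norm_num
  refine hull_subset_ge ((triBasis q₀ q₁ q₂ h).coord i) ?_ hx
  rintro v hv
  simp only [Set.mem_insert_iff, Set.mem_singleton_iff] at hv
  rcases hv with rfl | rfl | rfl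
  exacts [hj 0, hj 1, hj 2]

lemma coord_sum (x : E2) :
    (triBasis q₀ q₁ q₂ h).coord 0 x + (triBasis q₀ q₁ q₂ h).coord 1 x
      + (triBasis q₀ q₁ q₂ h).coord 2 x = 1 := by
  have := (triBasis q₀ q₁ q₂ h).sum_coord_apply_eq_one x
  rwa [Fin.sum_univ_three] at this

lemma coord_recon (x : E2) :
    x = (triBasis q₀ q₁ q₂ h).coord 0 x • q₀ + (triBasis q₀ q₁ q₂ h).coord 1 x • q₁
      + (triBasis q₀ q₁ q₂ h).coord 2 x • q₂ := by
  have := (triBasis q₀ q₁ q₂ h).linear_combination_coord_eq_self x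
  rw [Fin.sum_univ_three] at this
  exact this.symm

end Coord

/-- The prism triangulation covers the prism. -/
lemma prism_union (q₀ q₁ q₂ : E2) (h : AffineIndependent ℝ ![q₀, q₁, q₂]) :
    convexHull ℝ {((q₀, -1) : P3), (q₀,1), (q₁,1), (q₂,1)} ∪
      convexHull ℝ {((q₀, -1) : P3), (q₁,-1), (q₁,1), (q₂,1)} ∪
      convexHull ℝ {((q₀, -1) : P3), (q₁,-1), (q₂,-1), (q₂,1)} =
      (convexHull ℝ ({q₀, q₁, q₂} : Set E2)) ×ˢ Icc (-1:ℝ) 1 := by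
  apply Subset.antisymm
  · have hconv : Convex ℝ ((convexHull ℝ ({q₀,q₁,q₂} : Set E2)) ×ˢ Icc (-1:ℝ) 1) :=
      (convex_convexHull ℝ _).prod (convex_Icc _ _)
    refine union_subset (union_subset ?_ ?_) ?_ <;>
      refine convexHull_min ?_ hconv <;>
      · rintro v hv
        simp only [Set.mem_insert_iff, Set.mem_singleton_iff] at hv
        rcases hv with rfl | rfl | rfl | rfl <;>
          exact ⟨subset_convexHull ℝ _ (by simp), by norm_num⟩
  · rintro ⟨x, t⟩ ⟨hx, ht1, ht2⟩
    set l0 := (triBasis q₀ q₁ q₂ h).coord 0 x with hl0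
    set l1 := (triBasis q₀ q₁ q₂ h).coord 1 x with hl1
    set l2 := (triBasis q₀ q₁ q₂ h).coord 2 x with hl2
    have h0 : 0 ≤ l0 := coord_nonneg h hx 0
    have h1 : 0 ≤ l1 := coord_nonneg h hx 1
    have h2 : 0 ≤ l2 := coord_nonneg h hx 2
    have hsum : l0 + l1 + l2 = 1 := coord_sum h x
    have hrec : x = l0 • q₀ + l1 • q₁ + l2 • q₂ := coord_recon h x
    set s := (1 - t)/2 with hs
    have hs0 : 0 ≤ s := by rw [hs]; linarith
    have hs1 : s ≤ 1 := by rw [hs]; linarith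
    have hts : t = 1 - 2*s := by rw [hs]; ring
    rcases le_or_gt s l0 with hc | hc
    · left; left
      refine mem_hull4 (wa := s) (wb := l0 - s) (wc := l1) (wd := l2)
        hs0 (by linarith) h1 h2 (by linarith) ?_
      have heq : s • ((q₀,-1) : P3) + (l0 - s) • ((q₀,1) : P3) + l1 • ((q₁,1) : P3)
          + l2 • ((q₂,1) : P3)
          = (s • q₀ + (l0 - s) • q₀ + l1 • q₁ + l2 • q₂,
             s * (-1) + (l0 - s) * 1 + l1 * 1 + l2 * 1) := by
        simp [Prod.ext_iff, smul_eq_mul]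
      rw [heq, Prod.mk.injEq]
      constructor
      · rw [hrec]; module
      · ring_nf; linarith
    rcases le_or_gt s (l0 + l1) with hc2 | hc2
    · left; right
      refine mem_hull4 (wa := l0) (wb := s - l0) (wc := l0 + l1 - s) (wd := l2)
        h0 (by linarith) (by linarith) h2 (by linarith) ?_
      have heq : l0 • ((q₀,-1) : P3) + (s - l0) • ((q₁,-1) : P3) + (l0 + l1 - s) • ((q₁,1) : P3)
          + l2 • ((q₂,1) : P3)
          = (l0 • q₀ + (s - l0) • q₁ + (l0 + l1 - s) • q₁ + l2 • q₂,
             l0 * (-1) + (s - l0) * (-1) + (l0 + l1 - s) * 1 + l2 * 1) := by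
        simp [Prod.ext_iff, smul_eq_mul]
      rw [heq, Prod.mk.injEq]
      constructor
      · rw [hrec]; module
      · ring_nf; linarith
    · right
      refine mem_hull4 (wa := l0) (wb := l1) (wc := s - l0 - l1) (wd := 1 - s)
        h0 h1 (by linarith) (by linarith) (by ring) ?_
      have heq : l0 • ((q₀,-1) : P3) + l1 • ((q₁,-1) : P3) + (s - l0 - l1) • ((q₂,-1) : P3)
          + (1 - s) • ((q₂,1) : P3)
          = (l0 • q₀ + l1 • q₁ + (s - l0 - l1) • q₂ + (1 - s) • q₂,
             l0 * (-1) + l1 * (-1) + (s - l0 - l1) * (-1) + (1 - s) * 1) := by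
        simp [Prod.ext_iff, smul_eq_mul]
      rw [heq, Prod.mk.injEq]
      constructor
      · rw [hrec]
        have hl2' : l2 = 1 - l0 - l1 := by linarith
        rw [hl2']; module
      · rw [hts]; ring


/-- Interiors of the three tetrahedra in a prism triangulation are pairwise disjoint. -/
lemma prism_disj (q₀ q₁ q₂ : E2) (h : AffineIndependent ℝ ![q₀, q₁, q₂]) :
    (interior (convexHull ℝ {((q₀, -1) : P3), (q₀,1), (q₁,1), (q₂,1)}) ∩
      interior (convexHull ℝ {((q₀, -1) : P3), (q₁,-1), (q₁,1), (q₂,1)}) = ∅) ∧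
    (interior (convexHull ℝ {((q₀, -1) : P3), (q₀,1), (q₁,1), (q₂,1)}) ∩
      interior (convexHull ℝ {((q₀, -1) : P3), (q₁,-1), (q₂,-1), (q₂,1)}) = ∅) ∧
    (interior (convexHull ℝ {((q₀, -1) : P3), (q₁,-1), (q₁,1), (q₂,1)}) ∩
      interior (convexHull ℝ {((q₀, -1) : P3), (q₁,-1), (q₂,-1), (q₂,1)}) = ∅) := by
  set b := triBasis q₀ q₁ q₂ h with hb
  have e00 : b.coord 0 q₀ = 1 := coord_val h 0 0
  have e01 : b.coord 0 q₁ = 0 := coord_val h 0 1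
  have e02 : b.coord 0 q₂ = 0 := coord_val h 0 2
  have e10 : b.coord 1 q₀ = 0 := coord_val h 1 0
  have e11 : b.coord 1 q₁ = 1 := coord_val h 1 1
  have e12 : b.coord 1 q₂ = 0 := coord_val h 1 2
  set g₁ : P3 →ᵃ[ℝ] ℝ :=
    AffineMap.const ℝ P3 (1:ℝ) - AffineMap.snd - (2:ℝ) • ((b.coord 0).comp AffineMap.fst)
    with hg₁def
  set g₂ : P3 →ᵃ[ℝ] ℝ :=
    AffineMap.const ℝ P3 (1:ℝ) - AffineMap.snd
      - (2:ℝ) • ((b.coord 0 + b.coord 1).comp AffineMap.fst) with hg₂def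
  have hg₁ : ∀ v : P3, g₁ v = 1 - v.2 - 2 * (b.coord 0 v.1) := by
    intro v
    simp [hg₁def, AffineMap.coe_sub, AffineMap.coe_smul, AffineMap.coe_const,
      AffineMap.coe_comp, AffineMap.coe_fst, AffineMap.coe_snd, smul_eq_mul]
  have hg₂ : ∀ v : P3, g₂ v = 1 - v.2 - 2 * (b.coord 0 v.1 + b.coord 1 v.1) := by
    intro v
    simp [hg₂def, AffineMap.coe_sub, AffineMap.coe_smul, AffineMap.coe_const,
      AffineMap.coe_comp, AffineMap.coe_fst, AffineMap.coe_snd, smul_eq_mul]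
  have hne₁ : g₁ ((q₀, -1) : P3) ≠ g₁ ((q₀, 1) : P3) := by
    rw [hg₁ _, hg₁ _]; norm_num [e00]
  have hne₂ : g₂ ((q₀, -1) : P3) ≠ g₂ ((q₀, 1) : P3) := by
    rw [hg₂ _, hg₂ _]; norm_num [e00, e10]
  have hS0g₁ : convexHull ℝ {((q₀, -1) : P3), (q₀,1), (q₁,1), (q₂,1)} ⊆ {x | g₁ x ≤ 0} := by
    apply hull_subset_le
    rintro v hv
    simp only [Set.mem_insert_iff, Set.mem_singleton_iff] at hv
    rcases hv with rfl | rfl | rfl | rfl <;>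
      simp [hg₁, e00, e01, e02] <;> norm_num
  have hS1g₁ : convexHull ℝ {((q₀, -1) : P3), (q₁,-1), (q₁,1), (q₂,1)} ⊆ {x | 0 ≤ g₁ x} := by
    apply hull_subset_ge
    rintro v hv
    simp only [Set.mem_insert_iff, Set.mem_singleton_iff] at hv
    rcases hv with rfl | rfl | rfl | rfl <;>
      simp [hg₁, e00, e01, e02] <;> norm_num
  have hS0g₂ : convexHull ℝ {((q₀, -1) : P3), (q₀,1), (q₁,1), (q₂,1)} ⊆ {x | g₂ x ≤ 0} := by
    apply hull_subset_le
    rintro v hv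
    simp only [Set.mem_insert_iff, Set.mem_singleton_iff] at hv
    rcases hv with rfl | rfl | rfl | rfl <;>
      simp [hg₂, e00, e01, e02, e10, e11, e12] <;> norm_num
  have hS1g₂ : convexHull ℝ {((q₀, -1) : P3), (q₁,-1), (q₁,1), (q₂,1)} ⊆ {x | g₂ x ≤ 0} := by
    apply hull_subset_le
    rintro v hv
    simp only [Set.mem_insert_iff, Set.mem_singleton_iff] at hv
    rcases hv with rfl | rfl | rfl | rfl <;>
      simp [hg₂, e00, e01, e02, e10, e11, e12] <;> norm_num
  have hS2g₂ : convexHull ℝ {((q₀, -1) : P3), (q₁,-1), (q₂,-1), (q₂,1)} ⊆ {x | 0 ≤ g₂ x} := by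
    apply hull_subset_ge
    rintro v hv
    simp only [Set.mem_insert_iff, Set.mem_singleton_iff] at hv
    rcases hv with rfl | rfl | rfl | rfl <;>
      simp [hg₂, e00, e01, e02, e10, e11, e12] <;> norm_num
  exact ⟨interior_inter_empty g₁ hne₁ hS0g₁ hS1g₁,
    interior_inter_empty g₂ hne₂ hS0g₂ hS2g₂,
    interior_inter_empty g₂ hne₂ hS1g₂ hS2g₂⟩


/-- Key geometric fact: since the triangles meet exactly in the common edge,
`p₃` lies on the non-positive side of the line through `p₁, p₂` (in the
barycentric coordinate of `p₀`). -/
lemma cross_key (p₀ p₁ p₂ p₃ : E2) (h₁ : AffineIndependent ℝ ![p₀, p₁, p₂])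
    (hedge : convexHull ℝ {p₀, p₁, p₂} ∩ convexHull ℝ {p₁, p₂, p₃} =
      convexHull ℝ {p₁, p₂}) :
    (triBasis p₀ p₁ p₂ h₁).coord 0 p₃ ≤ 0 := by
  set b := triBasis p₀ p₁ p₂ h₁ with hb
  by_contra hpos
  push_neg at hpos
  set c0 := b.coord 0 p₃ with hc0
  set c1 := b.coord 1 p₃ with hc1
  set c2 := b.coord 2 p₃ with hc2
  have e01 : b.coord 0 p₁ = 0 := coord_val h₁ 0 1
  have e02 : b.coord 0 p₂ = 0 := coord_val h₁ 0 2
  have e11 : b.coord 1 p₁ = 1 := coord_val h₁ 1 1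
  have e12 : b.coord 1 p₂ = 0 := coord_val h₁ 1 2
  have e21 : b.coord 2 p₁ = 0 := coord_val h₁ 2 1
  have e22 : b.coord 2 p₂ = 1 := coord_val h₁ 2 2
  set m : E2 := AffineMap.lineMap p₁ p₂ (1/2 : ℝ) with hm
  set M : ℝ := 1 + |c1| + |c2| with hM
  have hM1 : (1:ℝ) ≤ M := by
    have := abs_nonneg c1; have := abs_nonneg c2; linarith
  have hMpos : (0:ℝ) < M := by linarith
  set ε : ℝ := 1/(2*M) with hε
  have hε0 : 0 < ε := by rw [hε]; positivity
  have hεM : ε * M = 1/2 := by rw [hε]; field_simp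
  have hε1 : ε ≤ 1 := by nlinarith
  have hmc : ∀ i : Fin 3, b.coord i m = (1/2) * (b.coord i p₁) + (1/2) * (b.coord i p₂) := by
    intro i
    rw [hm, AffineMap.apply_lineMap, AffineMap.lineMap_apply_module, smul_eq_mul, smul_eq_mul]
    norm_num
  set y : E2 := AffineMap.lineMap m p₃ ε with hy
  have hym : ∀ i : Fin 3, b.coord i y = (1 - ε) * (b.coord i m) + ε * (b.coord i p₃) := by
    intro i
    rw [hy, AffineMap.apply_lineMap, AffineMap.lineMap_apply_module, smul_eq_mul, smul_eq_mul]
  have hy0 : b.coord 0 y = ε * c0 := by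
    rw [hym 0, hmc 0, e01, e02]; ring
  have hy1 : b.coord 1 y = (1 - ε) * (1/2) + ε * c1 := by
    rw [hym 1, hmc 1, e11, e12]; ring
  have hy2 : b.coord 2 y = (1 - ε) * (1/2) + ε * c2 := by
    rw [hym 2, hmc 2, e21, e22]; ring
  have hb1 : ε * |c1| ≤ ε * (M - 1) := by
    apply mul_le_mul_of_nonneg_left ?_ hε0.le
    have := abs_nonneg c2; linarith
  have hb2 : ε * |c2| ≤ ε * (M - 1) := by
    apply mul_le_mul_of_nonneg_left ?_ hε0.le
    have := abs_nonneg c1; linarith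
  have hc1lb : ε * (-(|c1|)) ≤ ε * c1 := mul_le_mul_of_nonneg_left (neg_abs_le c1) hε0.le
  have hc2lb : ε * (-(|c2|)) ≤ ε * c2 := mul_le_mul_of_nonneg_left (neg_abs_le c2) hε0.le
  have h1pos : 0 < b.coord 1 y := by
    rw [hy1]
    have : ε * (-(|c1|)) = -(ε * |c1|) := by ring
    nlinarith
  have h2pos : 0 < b.coord 2 y := by
    rw [hy2]
    nlinarith
  have h0pos : 0 < b.coord 0 y := by rw [hy0]; exact mul_pos hε0 hpos
  have hyT1 : y ∈ convexHull ℝ ({p₀, p₁, p₂} : Set E2) :=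
    mem_hull3 h0pos.le h1pos.le h2pos.le (coord_sum h₁ y) (coord_recon h₁ y)
  have hmedge : m ∈ convexHull ℝ ({p₁, p₂} : Set E2) := by
    rw [convexHull_pair, segment_eq_image_lineMap]
    exact ⟨1/2, by norm_num, rfl⟩
  have hyT2 : y ∈ convexHull ℝ ({p₁, p₂, p₃} : Set E2) := by
    have hseg : y ∈ segment ℝ m p₃ := by
      rw [segment_eq_image_lineMap]
      exact ⟨ε, ⟨hε0.le, hε1⟩, rfl⟩
    refine (convex_convexHull ℝ _).segment_subset ?_ ?_ hseg
    · refine convexHull_mono ?_ hmedge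
      intro z hz
      simp only [Set.mem_insert_iff, Set.mem_singleton_iff] at hz ⊢
      tauto
    · exact subset_convexHull ℝ _ (by simp)
  have hyedge : y ∈ convexHull ℝ ({p₁, p₂} : Set E2) := by
    rw [← hedge]; exact ⟨hyT1, hyT2⟩
  have hle : b.coord 0 y ≤ 0 := by
    refine hull_subset_le (b.coord 0) ?_ hyedge
    rintro v hv
    simp only [Set.mem_insert_iff, Set.mem_singleton_iff] at hv
    rcases hv with rfl | rfl
    · exact le_of_eq e01
    · exact le_of_eq e02
  linarith

/-- Tetrahedra contained in opposite prisms have disjoint interiors. -/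
lemma cross_disj (p₀ p₁ p₂ p₃ : E2) (h₁ : AffineIndependent ℝ ![p₀, p₁, p₂])
    (hedge : convexHull ℝ {p₀, p₁, p₂} ∩ convexHull ℝ {p₁, p₂, p₃} =
      convexHull ℝ {p₁, p₂}) {S T : Set P3}
    (hS : S ⊆ (convexHull ℝ ({p₀, p₁, p₂} : Set E2)) ×ˢ Icc (-1:ℝ) 1)
    (hT : T ⊆ (convexHull ℝ ({p₁, p₂, p₃} : Set E2)) ×ˢ Icc (-1:ℝ) 1) :
    interior S ∩ interior T = ∅ := by
  set b := triBasis p₀ p₁ p₂ h₁ with hb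
  have e00 : b.coord 0 p₀ = 1 := coord_val h₁ 0 0
  have e01 : b.coord 0 p₁ = 0 := coord_val h₁ 0 1
  have e02 : b.coord 0 p₂ = 0 := coord_val h₁ 0 2
  have hkey : b.coord 0 p₃ ≤ 0 := cross_key p₀ p₁ p₂ p₃ h₁ hedge
  set g : P3 →ᵃ[ℝ] ℝ := (b.coord 0).comp AffineMap.fst with hgdef
  have hg : ∀ v : P3, g v = b.coord 0 v.1 := fun v => rfl
  have hne : g ((p₁, 0) : P3) ≠ g ((p₀, 0) : P3) := by
    rw [hg, hg]; simp only [e00, e01]; norm_num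
  rw [Set.inter_comm]
  refine interior_inter_empty g hne ?_ ?_
  · intro v hv
    have h1 : v.1 ∈ convexHull ℝ ({p₁, p₂, p₃} : Set E2) := (hT hv).1
    have h2 : v.1 ∈ {x : E2 | b.coord 0 x ≤ 0} := by
      refine hull_subset_le (b.coord 0) ?_ h1
      rintro z hz
      simp only [Set.mem_insert_iff, Set.mem_singleton_iff] at hz
      rcases hz with rfl | rfl | rfl
      · exact le_of_eq e01
      · exact le_of_eq e02
      · exact hkey
    exact h2
  · intro v hv
    have h1 : v.1 ∈ convexHull ℝ ({p₀, p₁, p₂} : Set E2) := (hS hv).1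
    have h2 : v.1 ∈ {x : E2 | 0 ≤ b.coord 0 x} := coord_nonneg h₁ h1 0
    exact h2

end PrismGlue

open PrismGlue in


/-- Lemma 3.1 of the paper: if two nondegenerate triangles `T₁ = [p₀,p₁,p₂]`
and `T₂ = [p₁,p₂,p₃]` in `ℝ²` meet exactly in their common edge `[p₁,p₂]`
(oriented compatibly), then the union of the prism triangulations of
`T₁ × [-1,1]` and `T₂ × [-1,1]` is a triangulation of `(T₁ ∪ T₂) × [-1,1]`:
the six tetrahedra cover `(T₁ ∪ T₂) × [-1,1]` and have pairwise disjoint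
topological interiors. -/
theorem prism_triangulations_glue
    (p₀ p₁ p₂ p₃ : EuclideanSpace ℝ (Fin 2))
    (h₁ : AffineIndependent ℝ ![p₀, p₁, p₂])
    (h₂ : AffineIndependent ℝ ![p₁, p₂, p₃])
    (hedge : convexHull ℝ {p₀, p₁, p₂} ∩ convexHull ℝ {p₁, p₂, p₃} =
      convexHull ℝ {p₁, p₂}) :
    (⋃ i : Fin 6,
        (![convexHull ℝ {((p₀, -1) : EuclideanSpace ℝ (Fin 2) × ℝ),
              (p₀, 1), (p₁, 1), (p₂, 1)},
           convexHull ℝ {((p₀, -1) : EuclideanSpace ℝ (Fin 2) × ℝ),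
              (p₁, -1), (p₁, 1), (p₂, 1)},
           convexHull ℝ {((p₀, -1) : EuclideanSpace ℝ (Fin 2) × ℝ),
              (p₁, -1), (p₂, -1), (p₂, 1)},
           convexHull ℝ {((p₁, -1) : EuclideanSpace ℝ (Fin 2) × ℝ),
              (p₁, 1), (p₂, 1), (p₃, 1)},
           convexHull ℝ {((p₁, -1) : EuclideanSpace ℝ (Fin 2) × ℝ),
              (p₂, -1), (p₂, 1), (p₃, 1)},
           convexHull ℝ {((p₁, -1) : EuclideanSpace ℝ (Fin 2) × ℝ),
              (p₂, -1), (p₃, -1), (p₃, 1)}] : Fin 6 → Set (EuclideanSpace ℝ (Fin 2) × ℝ)) i) =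
      (convexHull ℝ {p₀, p₁, p₂} ∪ convexHull ℝ {p₁, p₂, p₃}) ×ˢ (Set.Icc (-1 : ℝ) 1) ∧
    (∀ i j : Fin 6, i ≠ j →
      interior ((![convexHull ℝ {((p₀, -1) : EuclideanSpace ℝ (Fin 2) × ℝ),
              (p₀, 1), (p₁, 1), (p₂, 1)},
           convexHull ℝ {((p₀, -1) : EuclideanSpace ℝ (Fin 2) × ℝ),
              (p₁, -1), (p₁, 1), (p₂, 1)},
           convexHull ℝ {((p₀, -1) : EuclideanSpace ℝ (Fin 2) × ℝ),
              (p₁, -1), (p₂, -1), (p₂, 1)},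
           convexHull ℝ {((p₁, -1) : EuclideanSpace ℝ (Fin 2) × ℝ),
              (p₁, 1), (p₂, 1), (p₃, 1)},
           convexHull ℝ {((p₁, -1) : EuclideanSpace ℝ (Fin 2) × ℝ),
              (p₂, -1), (p₂, 1), (p₃, 1)},
           convexHull ℝ {((p₁, -1) : EuclideanSpace ℝ (Fin 2) × ℝ),
              (p₂, -1), (p₃, -1), (p₃, 1)}] : Fin 6 → Set (EuclideanSpace ℝ (Fin 2) × ℝ)) i) ∩
      interior ((![convexHull ℝ {((p₀, -1) : EuclideanSpace ℝ (Fin 2) × ℝ),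
              (p₀, 1), (p₁, 1), (p₂, 1)},
           convexHull ℝ {((p₀, -1) : EuclideanSpace ℝ (Fin 2) × ℝ),
              (p₁, -1), (p₁, 1), (p₂, 1)},
           convexHull ℝ {((p₀, -1) : EuclideanSpace ℝ (Fin 2) × ℝ),
              (p₁, -1), (p₂, -1), (p₂, 1)},
           convexHull ℝ {((p₁, -1) : EuclideanSpace ℝ (Fin 2) × ℝ),
              (p₁, 1), (p₂, 1), (p₃, 1)},
           convexHull ℝ {((p₁, -1) : EuclideanSpace ℝ (Fin 2) × ℝ),
              (p₂, -1), (p₂, 1), (p₃, 1)},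
           convexHull ℝ {((p₁, -1) : EuclideanSpace ℝ (Fin 2) × ℝ),
              (p₂, -1), (p₃, -1), (p₃, 1)}] : Fin 6 → Set (EuclideanSpace ℝ (Fin 2) × ℝ)) j) = ∅) := by

  have hpr1 := PrismGlue.prism_union p₀ p₁ p₂ h₁
  have hpr2 := PrismGlue.prism_union p₁ p₂ p₃ h₂
  have P1 := PrismGlue.prism_disj p₀ p₁ p₂ h₁
  have P2 := PrismGlue.prism_disj p₁ p₂ p₃ h₂
  have sub10 : convexHull ℝ {((p₀, -1) : P3), (p₀,1), (p₁,1), (p₂,1)} ⊆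
      (convexHull ℝ ({p₀, p₁, p₂} : Set E2)) ×ˢ Set.Icc (-1:ℝ) 1 :=
    ((Set.subset_union_left.trans Set.subset_union_left).trans hpr1.subset)
  have sub11 : convexHull ℝ {((p₀, -1) : P3), (p₁,-1), (p₁,1), (p₂,1)} ⊆
      (convexHull ℝ ({p₀, p₁, p₂} : Set E2)) ×ˢ Set.Icc (-1:ℝ) 1 :=
    ((Set.subset_union_right.trans Set.subset_union_left).trans hpr1.subset)
  have sub12 : convexHull ℝ {((p₀, -1) : P3), (p₁,-1), (p₂,-1), (p₂,1)} ⊆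
      (convexHull ℝ ({p₀, p₁, p₂} : Set E2)) ×ˢ Set.Icc (-1:ℝ) 1 :=
    (Set.subset_union_right.trans hpr1.subset)
  have sub20 : convexHull ℝ {((p₁, -1) : P3), (p₁,1), (p₂,1), (p₃,1)} ⊆
      (convexHull ℝ ({p₁, p₂, p₃} : Set E2)) ×ˢ Set.Icc (-1:ℝ) 1 :=
    ((Set.subset_union_left.trans Set.subset_union_left).trans hpr2.subset)
  have sub21 : convexHull ℝ {((p₁, -1) : P3), (p₂,-1), (p₂,1), (p₃,1)} ⊆
      (convexHull ℝ ({p₁, p₂, p₃} : Set E2)) ×ˢ Set.Icc (-1:ℝ) 1 :=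
    ((Set.subset_union_right.trans Set.subset_union_left).trans hpr2.subset)
  have sub22 : convexHull ℝ {((p₁, -1) : P3), (p₂,-1), (p₃,-1), (p₃,1)} ⊆
      (convexHull ℝ ({p₁, p₂, p₃} : Set E2)) ×ˢ Set.Icc (-1:ℝ) 1 :=
    (Set.subset_union_right.trans hpr2.subset)
  have C : ∀ {S T : Set P3},
      S ⊆ (convexHull ℝ ({p₀, p₁, p₂} : Set E2)) ×ˢ Set.Icc (-1:ℝ) 1 →
      T ⊆ (convexHull ℝ ({p₁, p₂, p₃} : Set E2)) ×ˢ Set.Icc (-1:ℝ) 1 →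
      interior S ∩ interior T = ∅ :=
    fun hS hT => PrismGlue.cross_disj p₀ p₁ p₂ p₃ h₁ hedge hS hT
  have comm : ∀ {A B : Set P3}, interior A ∩ interior B = ∅ →
      interior B ∩ interior A = ∅ := fun h => by rw [Set.inter_comm]; exact h
  constructor
  · apply Set.eq_of_subset_of_subset
    · intro v hv
      rw [Set.mem_iUnion] at hv
      obtain ⟨i, hi⟩ := hv
      rw [Set.union_prod, ← hpr1, ← hpr2]
      fin_cases i
      · exact Or.inl (Or.inl (Or.inl hi))
      · exact Or.inl (Or.inl (Or.inr hi))
      · exact Or.inl (Or.inr hi)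
      · exact Or.inr (Or.inl (Or.inl hi))
      · exact Or.inr (Or.inl (Or.inr hi))
      · exact Or.inr (Or.inr hi)
    · intro v hv
      rw [Set.union_prod, ← hpr1, ← hpr2] at hv
      rw [Set.mem_iUnion]
      simp only [Set.mem_union] at hv
      rcases hv with ((h | h) | h) | ((h | h) | h)
      exacts [⟨0, h⟩, ⟨1, h⟩, ⟨2, h⟩, ⟨3, h⟩, ⟨4, h⟩, ⟨5, h⟩]
  · intro i j hij
    fin_cases i <;> fin_cases j
    · exact absurd rfl hij
    · exact P1.1
    · exact P1.2.1
    · exact C sub10 sub20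
    · exact C sub10 sub21
    · exact C sub10 sub22
    · exact comm P1.1
    · exact absurd rfl hij
    · exact P1.2.2
    · exact C sub11 sub20
    · exact C sub11 sub21
    · exact C sub11 sub22
    · exact comm P1.2.1
    · exact comm P1.2.2
    · exact absurd rfl hij
    · exact C sub12 sub20
    · exact C sub12 sub21
    · exact C sub12 sub22
    · exact comm (C sub10 sub20)
    · exact comm (C sub11 sub20)
    · exact comm (C sub12 sub20)
    · exact absurd rfl hij
    · exact P2.1
    · exact P2.2.1
    · exact comm (C sub10 sub21)
    · exact comm (C sub11 sub21)
    · exact comm (C sub12 sub21)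
    · exact comm P2.1
    · exact absurd rfl hij
    · exact P2.2.2
    · exact comm (C sub10 sub22)
    · exact comm (C sub11 sub22)
    · exact comm (C sub12 sub22)
    · exact comm P2.2.1
    · exact comm P2.2.2
    · exact absurd rfl hij
end

section
/- Let p₀, p₁, p₂ ∈ ℝ² be affinely independent, vᵢ = (pᵢ, -1), wᵢ = (pᵢ, 1). Let S′ = convexHull ℝ {v₀, v₁, w₀, w₁} be the boundary square of the prism lying over the edge from p₀ to p₁. Then Δ₀ ∩ S′ = convexHull ℝ {v₀, w₀, w₁}, Δ₁ ∩ S′ = convexHull ℝ {v₀, v₁, w₁}, and Δ₂ ∩ S′ = segment ℝ v₀ v₁; i.e., the prism triangulation divides this boundary square along the diagonal from v₀ to w₁ (from (start,-1) to (end,1) of the oriented edge). -/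
variable {E : Type*} [AddCommGroup E] [Module ℝ E]

lemma extract2 {A B x : E} (hx : x ∈ convexHull ℝ ({A, B} : Set E)) :
    ∃ a b : ℝ, 0 ≤ a ∧ 0 ≤ b ∧ a + b = 1 ∧ x = a • A + b • B := by
  rw [convexHull_pair] at hx
  obtain ⟨a, b, ha, hb, hab, h⟩ := hx
  exact ⟨a, b, ha, hb, hab, h.symm⟩

lemma extract3 {A B C x : E} (hx : x ∈ convexHull ℝ ({A, B, C} : Set E)) :
    ∃ a b c : ℝ, 0 ≤ a ∧ 0 ≤ b ∧ 0 ≤ c ∧ a + b + c = 1 ∧ x = a • A + b • B + c • C := by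
  rw [convexHull_insert (by simp : ({B, C} : Set E).Nonempty), mem_convexJoin] at hx
  obtain ⟨A', hA', z, hz, u, v, hu, hv, huv, hx⟩ := hx
  rw [Set.mem_singleton_iff] at hA'; subst hA'
  obtain ⟨b, c, hb, hc, hbc, hzeq⟩ := extract2 hz
  refine ⟨u, v * b, v * c, hu, mul_nonneg hv hb, mul_nonneg hv hc, by nlinarith, ?_⟩
  rw [← hx, hzeq, smul_add, mul_smul, mul_smul, add_assoc]

lemma extract4 {A B C D x : E} (hx : x ∈ convexHull ℝ ({A, B, C, D} : Set E)) :
    ∃ a b c d : ℝ, 0 ≤ a ∧ 0 ≤ b ∧ 0 ≤ c ∧ 0 ≤ d ∧ a + b + c + d = 1 ∧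
      x = a • A + b • B + c • C + d • D := by
  rw [convexHull_insert (by simp : ({B, C, D} : Set E).Nonempty), mem_convexJoin] at hx
  obtain ⟨A', hA', z, hz, u, v, hu, hv, huv, hx⟩ := hx
  rw [Set.mem_singleton_iff] at hA'; subst hA'
  obtain ⟨b, c, d, hb, hc, hd, hbcd, hzeq⟩ := extract3 hz
  refine ⟨u, v * b, v * c, v * d, hu, mul_nonneg hv hb, mul_nonneg hv hc, mul_nonneg hv hd,
    by nlinarith, ?_⟩
  rw [← hx, hzeq, smul_add, smul_add, mul_smul, mul_smul, mul_smul, add_assoc, add_assoc,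
    add_assoc]

lemma combo3_mem (A B C : E) {a b c : ℝ} (ha : 0 ≤ a) (hb : 0 ≤ b) (hc : 0 ≤ c)
    (habc : a + b + c = 1) : a • A + b • B + c • C ∈ convexHull ℝ ({A, B, C} : Set E) := by
  have := Finset.centerMass_mem_convexHull (t := (Finset.univ : Finset (Fin 3)))
    (w := ![a, b, c]) (z := ![A, B, C]) (s := ({A, B, C} : Set E))
    (by intro i _; fin_cases i <;> assumption)
    (by simp [Fin.sum_univ_three, habc])
    (by intro i _; fin_cases i <;> simp)
  simpa [Finset.centerMass, Fin.sum_univ_three, habc] using this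

lemma bar {p₀ p₁ p₂ : EuclideanSpace ℝ (Fin 2)} (hp : AffineIndependent ℝ ![p₀, p₁, p₂])
    {s₀ s₁ s₂ u₀ u₁ u₂ : ℝ} (hs : s₀ + s₁ + s₂ = u₀ + u₁ + u₂)
    (h : s₀ • p₀ + s₁ • p₁ + s₂ • p₂ = u₀ • p₀ + u₁ • p₁ + u₂ • p₂) :
    s₀ = u₀ ∧ s₁ = u₁ ∧ s₂ = u₂ := by
  rw [affineIndependent_iff] at hp
  have key := hp Finset.univ ![s₀ - u₀, s₁ - u₁, s₂ - u₂]
    (by simp [Fin.sum_univ_three]; linarith)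
    (by
      simp only [Fin.sum_univ_three, Matrix.cons_val_zero, Matrix.cons_val_one, Matrix.head_cons,
        Matrix.cons_val_two, Matrix.tail_cons]
      rw [sub_smul, sub_smul, sub_smul]
      rw [show s₀ • p₀ - u₀ • p₀ + (s₁ • p₁ - u₁ • p₁) + (s₂ • p₂ - u₂ • p₂)
          = (s₀ • p₀ + s₁ • p₁ + s₂ • p₂) - (u₀ • p₀ + u₁ • p₁ + u₂ • p₂) by abel]
      rw [h, sub_self])
  have h0 := key 0 (Finset.mem_univ _)
  have h1 := key 1 (Finset.mem_univ _)
  have h2 := key 2 (Finset.mem_univ _)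
  simp at h0 h1 h2
  exact ⟨by linarith [sub_eq_zero.mp h0], by linarith, by linarith⟩


/-- The prism triangulation of `T × [-1,1]` (Section 3 of the paper) divides
the boundary square over the oriented edge `p₀p₁` along the diagonal from
`v₀ = (p₀,-1)` to `w₁ = (p₁,1)`: `Δ₀` meets it in the triangle `[v₀,w₀,w₁]`,
`Δ₁` in the triangle `[v₀,v₁,w₁]`, and `Δ₂` in the edge `[v₀,v₁]`. -/
theorem prism_triangulation_boundary_square
    (p₀ p₁ p₂ : EuclideanSpace ℝ (Fin 2))
    (hp : AffineIndependent ℝ ![p₀, p₁, p₂]) :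
    convexHull ℝ {((p₀, -1) : EuclideanSpace ℝ (Fin 2) × ℝ),
        (p₀, 1), (p₁, 1), (p₂, 1)} ∩
      convexHull ℝ {((p₀, -1) : EuclideanSpace ℝ (Fin 2) × ℝ),
        (p₁, -1), (p₀, 1), (p₁, 1)} =
      convexHull ℝ {((p₀, -1) : EuclideanSpace ℝ (Fin 2) × ℝ), (p₀, 1), (p₁, 1)} ∧
    convexHull ℝ {((p₀, -1) : EuclideanSpace ℝ (Fin 2) × ℝ),
        (p₁, -1), (p₁, 1), (p₂, 1)} ∩
      convexHull ℝ {((p₀, -1) : EuclideanSpace ℝ (Fin 2) × ℝ),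
        (p₁, -1), (p₀, 1), (p₁, 1)} =
      convexHull ℝ {((p₀, -1) : EuclideanSpace ℝ (Fin 2) × ℝ), (p₁, -1), (p₁, 1)} ∧
    convexHull ℝ {((p₀, -1) : EuclideanSpace ℝ (Fin 2) × ℝ),
        (p₁, -1), (p₂, -1), (p₂, 1)} ∩
      convexHull ℝ {((p₀, -1) : EuclideanSpace ℝ (Fin 2) × ℝ),
        (p₁, -1), (p₀, 1), (p₁, 1)} =
      segment ℝ ((p₀, -1) : EuclideanSpace ℝ (Fin 2) × ℝ) (p₁, -1) := by
  refine ⟨Set.Subset.antisymm ?_ ?_, Set.Subset.antisymm ?_ ?_, Set.Subset.antisymm ?_ ?_⟩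
  · rintro x ⟨h1, h2⟩
    obtain ⟨a, b, c, d, ha, hb, hc, hd, hsum, hx⟩ := extract4 h1
    obtain ⟨e, f, g, k, he, hf, hg, hk, hsum', hx'⟩ := extract4 h2
    have hx1 : x.1 = (a + b) • p₀ + c • p₁ + d • p₂ := by
      have := congrArg Prod.fst hx
      simp only [Prod.fst_add, Prod.smul_fst] at this
      rw [this, add_smul]
    have hx'1 : x.1 = (e + g) • p₀ + (f + k) • p₁ + (0 : ℝ) • p₂ := by
      have := congrArg Prod.fst hx'
      simp only [Prod.fst_add, Prod.smul_fst] at this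
      rw [this, add_smul, add_smul, zero_smul, add_zero]; abel
    obtain ⟨-, -, hd0⟩ := bar hp (by linarith) (hx1.symm.trans hx'1)
    rw [hd0, zero_smul, add_zero] at hx
    rw [hx]
    exact combo3_mem _ _ _ ha hb hc (by linarith)
  · exact Set.subset_inter
      (convexHull_mono (by intro y hy; simp only [Set.mem_insert_iff,
        Set.mem_singleton_iff] at hy ⊢; tauto))
      (convexHull_mono (by intro y hy; simp only [Set.mem_insert_iff,
        Set.mem_singleton_iff] at hy ⊢; tauto))
  · rintro x ⟨h1, h2⟩
    obtain ⟨a, b, c, d, ha, hb, hc, hd, hsum, hx⟩ := extract4 h1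
    obtain ⟨e, f, g, k, he, hf, hg, hk, hsum', hx'⟩ := extract4 h2
    have hx1 : x.1 = a • p₀ + (b + c) • p₁ + d • p₂ := by
      have := congrArg Prod.fst hx
      simp only [Prod.fst_add, Prod.smul_fst] at this
      rw [this, add_smul]; abel
    have hx'1 : x.1 = (e + g) • p₀ + (f + k) • p₁ + (0 : ℝ) • p₂ := by
      have := congrArg Prod.fst hx'
      simp only [Prod.fst_add, Prod.smul_fst] at this
      rw [this, add_smul, add_smul, zero_smul, add_zero]; abel
    obtain ⟨-, -, hd0⟩ := bar hp (by linarith) (hx1.symm.trans hx'1)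
    rw [hd0, zero_smul, add_zero] at hx
    rw [hx]
    exact combo3_mem _ _ _ ha hb hc (by linarith)
  · exact Set.subset_inter
      (convexHull_mono (by intro y hy; simp only [Set.mem_insert_iff,
        Set.mem_singleton_iff] at hy ⊢; tauto))
      (convexHull_mono (by intro y hy; simp only [Set.mem_insert_iff,
        Set.mem_singleton_iff] at hy ⊢; tauto))
  · rintro x ⟨h1, h2⟩
    obtain ⟨a, b, c, d, ha, hb, hc, hd, hsum, hx⟩ := extract4 h1
    obtain ⟨e, f, g, k, he, hf, hg, hk, hsum', hx'⟩ := extract4 h2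
    have hx1 : x.1 = a • p₀ + b • p₁ + (c + d) • p₂ := by
      have := congrArg Prod.fst hx
      simp only [Prod.fst_add, Prod.smul_fst] at this
      rw [this, add_smul]; abel
    have hx'1 : x.1 = (e + g) • p₀ + (f + k) • p₁ + (0 : ℝ) • p₂ := by
      have := congrArg Prod.fst hx'
      simp only [Prod.fst_add, Prod.smul_fst] at this
      rw [this, add_smul, add_smul, zero_smul, add_zero]; abel
    obtain ⟨-, -, hcd⟩ := bar hp (by linarith) (hx1.symm.trans hx'1)
    have hc0 : c = 0 := by linarith
    have hd0 : d = 0 := by linarith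
    rw [hc0, hd0, zero_smul, zero_smul, add_zero, add_zero] at hx
    exact ⟨a, b, ha, hb, by linarith, hx.symm⟩
  · rw [← convexHull_pair]
    exact Set.subset_inter
      (convexHull_mono (by intro y hy; simp only [Set.mem_insert_iff,
        Set.mem_singleton_iff] at hy ⊢; tauto))
      (convexHull_mono (by intro y hy; simp only [Set.mem_insert_iff,
        Set.mem_singleton_iff] at hy ⊢; tauto))
end

section
/- Let p₀, p₁, p₂ ∈ ℝ² be affinely independent, vᵢ = (pᵢ, -1), wᵢ = (pᵢ, 1). Then the middle slice of the prism triangulation meets the two outer tetrahedra in triangles: Δ₀ ∩ (ℝ² × {0}) = convexHull ℝ {(p₀,0), ((p₀+p₁)/2, 0), ((p₀+p₂)/2, 0)} and Δ₂ ∩ (ℝ² × {0}) = convexHull ℝ {((p₀+p₂)/2, 0), ((p₁+p₂)/2, 0), (p₂, 0)}; these are the normal triangles in which the middle surface T × {0} meets Δ₀ (linking vertex v₀) and Δ₂ (linking vertex w₂). -/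
open Set

lemma slice_aux {F : Type*} [NormedAddCommGroup F] [NormedSpace ℝ F]
    (a : F × ℝ) (s : Set (F × ℝ)) (hs : s.Nonempty) (c : ℝ) (hc : c ≠ 0)
    (ha : a.2 = -c) (h1 : ∀ y ∈ s, y.2 = c) :
    convexHull ℝ (insert a s) ∩ (Set.univ ×ˢ ({0} : Set ℝ)) =
      midpoint ℝ a '' convexHull ℝ s := by
  have hconv : Convex ℝ {y : F × ℝ | y.2 = c} :=
    convex_hyperplane ⟨fun _ _ => rfl, fun _ _ => rfl⟩ c
  have hsub : convexHull ℝ s ⊆ {y : F × ℝ | y.2 = c} := convexHull_min h1 hconv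
  ext x
  simp only [Set.mem_inter_iff, Set.mem_prod, Set.mem_univ, Set.mem_singleton_iff,
    true_and, Set.mem_image]
  constructor
  · rintro ⟨hx, hx2⟩
    rw [convexHull_insert hs, mem_convexJoin] at hx
    obtain ⟨a', ha', y, hy, u, v, hu, hv, huv, hxeq⟩ := hx
    rw [show a' = a from ha'] at hxeq
    have hy2 : y.2 = c := hsub hy
    have hx2' : u * a.2 + v * y.2 = 0 := by rw [← hxeq] at hx2; exact hx2
    rw [ha, hy2] at hx2'
    have hvu : (v - u) * c = 0 := by ring_nf; linarith
    have hvu' : v = u := by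
      rcases mul_eq_zero.1 hvu with h | h
      · linarith
      · exact absurd h hc
    have hu2 : u = 1/2 := by linarith
    have hv2 : v = 1/2 := by linarith
    refine ⟨y, hy, ?_⟩
    rw [midpoint_eq_smul_add, invOf_eq_inv, ← hxeq, hu2, hv2, smul_add]
    norm_num
  · rintro ⟨y, hy, rfl⟩
    have hy2 : y.2 = c := hsub hy
    constructor
    · have ha' : a ∈ convexHull ℝ (insert a s) :=
        subset_convexHull ℝ _ (Set.mem_insert a s)
      have hy' : y ∈ convexHull ℝ (insert a s) :=
        convexHull_mono (Set.subset_insert a s) hy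
      exact (convex_convexHull ℝ _).segment_subset ha' hy' (midpoint_mem_segment a y)
    · have h : (midpoint ℝ a y).2 = midpoint ℝ a.2 y.2 := rfl
      rw [h, ha, hy2, midpoint_eq_smul_add]
      norm_num

lemma midpoint_eq_homothety {F : Type*} [NormedAddCommGroup F] [NormedSpace ℝ F]
    (a : F) : midpoint ℝ a = AffineMap.homothety a (1/2 : ℝ) := by
  funext y
  rw [AffineMap.homothety_apply, midpoint_eq_smul_add]
  simp [vsub_eq_sub, vadd_eq_add, smul_sub]
  module

lemma midpoint_image {F : Type*} [NormedAddCommGroup F] [NormedSpace ℝ F]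
    (a : F) (s : Set F) :
    midpoint ℝ a '' convexHull ℝ s = convexHull ℝ (midpoint ℝ a '' s) := by
  rw [midpoint_eq_homothety]
  exact AffineMap.image_convexHull _ s

lemma mid_pair {F : Type*} [NormedAddCommGroup F] [NormedSpace ℝ F]
    (q r : F) (c : ℝ) : midpoint ℝ ((q, -c) : F × ℝ) (r, c) = (midpoint ℝ q r, 0) := by
  have h : midpoint ℝ ((q, -c) : F × ℝ) (r, c) = (midpoint ℝ q r, midpoint ℝ (-c) c) := rfl
  rw [h, midpoint_eq_smul_add]
  norm_num

/-- The middle slice `ℝ² × {0}` meets the outer tetrahedra `Δ₀` and `Δ₂` of the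
prism triangulation in normal triangles: `Δ₀ ∩ (ℝ² × {0})` is the triangle with
vertices `(p₀,0)`, `((p₀+p₁)/2,0)`, `((p₀+p₂)/2,0)` (linking `v₀`), and
`Δ₂ ∩ (ℝ² × {0})` is the triangle with vertices `((p₀+p₂)/2,0)`,
`((p₁+p₂)/2,0)`, `(p₂,0)` (linking `w₂`). -/
theorem prism_middle_slice_triangles
    (p₀ p₁ p₂ : EuclideanSpace ℝ (Fin 2))
    (hp : AffineIndependent ℝ ![p₀, p₁, p₂]) :
    convexHull ℝ {((p₀, -1) : EuclideanSpace ℝ (Fin 2) × ℝ),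
        (p₀, 1), (p₁, 1), (p₂, 1)} ∩
      (Set.univ ×ˢ ({0} : Set ℝ)) =
      convexHull ℝ {((p₀, 0) : EuclideanSpace ℝ (Fin 2) × ℝ),
        (midpoint ℝ p₀ p₁, 0), (midpoint ℝ p₀ p₂, 0)} ∧
    convexHull ℝ {((p₀, -1) : EuclideanSpace ℝ (Fin 2) × ℝ),
        (p₁, -1), (p₂, -1), (p₂, 1)} ∩
      (Set.univ ×ˢ ({0} : Set ℝ)) =
      convexHull ℝ {((midpoint ℝ p₀ p₂, 0) : EuclideanSpace ℝ (Fin 2) × ℝ),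
        (midpoint ℝ p₁ p₂, 0), (p₂, 0)} := by
  constructor
  · have h := slice_aux ((p₀, -1) : EuclideanSpace ℝ (Fin 2) × ℝ) {(p₀, 1), (p₁, 1), (p₂, 1)}
      ⟨(p₀, 1), by simp⟩ 1 one_ne_zero rfl (by rintro y (rfl | rfl | rfl) <;> rfl)
    rw [h, midpoint_image]
    congr 1
    rw [Set.image_insert_eq, Set.image_insert_eq, Set.image_singleton,
      mid_pair, mid_pair, mid_pair, midpoint_self]
  · have hset : ({((p₀, -1) : EuclideanSpace ℝ (Fin 2) × ℝ), (p₁, -1), (p₂, -1), (p₂, 1)} : Set (EuclideanSpace ℝ (Fin 2) × ℝ)) =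
        insert ((p₂, 1) : EuclideanSpace ℝ (Fin 2) × ℝ) {(p₀, -1), (p₁, -1), (p₂, -1)} := by
      ext x; simp only [Set.mem_insert_iff, Set.mem_singleton_iff]; tauto
    rw [hset]
    have h := slice_aux ((p₂, 1) : EuclideanSpace ℝ (Fin 2) × ℝ) {(p₀, -1), (p₁, -1), (p₂, -1)}
      ⟨(p₀, -1), by simp⟩ (-1) (by norm_num) (by norm_num)
      (by rintro y (rfl | rfl | rfl) <;> rfl)
    rw [h, midpoint_image]
    have hm : ∀ q : EuclideanSpace ℝ (Fin 2), midpoint ℝ ((p₂, 1) : EuclideanSpace ℝ (Fin 2) × ℝ) (q, -1) = (midpoint ℝ q p₂, 0) := by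
      intro q
      rw [midpoint_comm]
      have := mid_pair q p₂ (1 : ℝ)
      simpa using this
    congr 1
    rw [Set.image_insert_eq, Set.image_insert_eq, Set.image_singleton,
      hm, hm, hm, midpoint_self]
end

section
/- Let p₀, p₁, p₂ ∈ ℝ² be affinely independent, vᵢ = (pᵢ, -1), wᵢ = (pᵢ, 1). Then the middle slice of the prism triangulation meets the middle tetrahedron in a quadrilateral: Δ₁ ∩ (ℝ² × {0}) = convexHull ℝ {((p₀+p₁)/2, 0), ((p₀+p₂)/2, 0), (p₁, 0), ((p₁+p₂)/2, 0)}; this is the normal quadrilateral in which the middle surface T × {0} meets Δ₁ (linking the edge v₀v₁, i.e., separating the opposite edges v₀v₁ and w₁w₂ of Δ₁). -/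
open Finset

lemma mem_convexHull_quad {E : Type*} [AddCommGroup E] [Module ℝ E]
    (x y z w : EuclideanSpace ℝ (Fin 2) × ℝ) {a b c d : ℝ} (ha : 0 ≤ a) (hb : 0 ≤ b) (hc : 0 ≤ c) (hd : 0 ≤ d)
    (hsum : a + b + c + d = 1) :
    a • x + b • y + c • z + d • w ∈ convexHull ℝ ({x, y, z, w} : Set (EuclideanSpace ℝ (Fin 2) × ℝ)) := by
  apply mem_convexHull_of_exists_fintype (ι := Fin 4) ![a,b,c,d] ![x,y,z,w]
  · intro i; fin_cases i <;> assumption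
  · simp [Fin.sum_univ_four]; linarith
  · intro i; fin_cases i <;> simp
  · simp [Fin.sum_univ_four]

/-- The middle slice `ℝ² × {0}` meets the middle tetrahedron `Δ₁` of the prism
triangulation in a normal quadrilateral with vertices `((p₀+p₁)/2,0)`,
`((p₀+p₂)/2,0)`, `(p₁,0)`, `((p₁+p₂)/2,0)`, linking the edge `v₀v₁` (i.e.
separating the opposite edges `v₀v₁` and `w₁w₂` of `Δ₁`). -/
theorem prism_middle_slice_quadrilateral
    (p₀ p₁ p₂ : EuclideanSpace ℝ (Fin 2))
    (hp : AffineIndependent ℝ ![p₀, p₁, p₂]) :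
    convexHull ℝ {((p₀, -1) : EuclideanSpace ℝ (Fin 2) × ℝ),
        (p₁, -1), (p₁, 1), (p₂, 1)} ∩
      (Set.univ ×ˢ ({0} : Set ℝ)) =
      convexHull ℝ {((midpoint ℝ p₀ p₁, 0) : EuclideanSpace ℝ (Fin 2) × ℝ),
        (midpoint ℝ p₀ p₂, 0), (p₁, 0), (midpoint ℝ p₁ p₂, 0)} := by
  classical
  set v₀ : EuclideanSpace ℝ (Fin 2) × ℝ := (p₀, -1)
  set v₁ : EuclideanSpace ℝ (Fin 2) × ℝ := (p₁, -1)
  set w₁ : EuclideanSpace ℝ (Fin 2) × ℝ := (p₁, 1)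
  set w₂ : EuclideanSpace ℝ (Fin 2) × ℝ := (p₂, 1)
  have h01 : p₀ ≠ p₁ := fun h => by
    have : (0 : Fin 3) = 1 := hp.injective (by simpa using h); simp at this
  have h12 : p₁ ≠ p₂ := fun h => by
    have : (1 : Fin 3) = 2 := hp.injective (by simpa using h); simp at this
  have hv01 : v₀ ≠ v₁ := fun h => h01 (congrArg Prod.fst h)
  have hv0w1 : v₀ ≠ w₁ := fun h => by have := congrArg Prod.snd h; norm_num at this
  have hv0w2 : v₀ ≠ w₂ := fun h => by have := congrArg Prod.snd h; norm_num at this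
  have hv1w1 : v₁ ≠ w₁ := fun h => by have := congrArg Prod.snd h; norm_num at this
  have hv1w2 : v₁ ≠ w₂ := fun h => by have := congrArg Prod.snd h; norm_num at this
  have hw12 : w₁ ≠ w₂ := fun h => h12 (congrArg Prod.fst h)
  apply Set.Subset.antisymm
  · rintro x ⟨hx, -, hx2⟩
    simp only [Set.mem_singleton_iff] at hx2
    have hset : ({v₀, v₁, w₁, w₂} : Set (EuclideanSpace ℝ (Fin 2) × ℝ)) = (({v₀, v₁, w₁, w₂} : Finset (EuclideanSpace ℝ (Fin 2) × ℝ)) : Set (EuclideanSpace ℝ (Fin 2) × ℝ)) := by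
      simp
    rw [hset, Finset.convexHull_eq] at hx
    obtain ⟨w, hw0, hw1, hwx⟩ := hx
    rw [Finset.centerMass_eq_of_sum_1 _ _ hw1] at hwx
    set a := w v₀; set b := w v₁; set c := w w₁; set d := w w₂
    have ha : 0 ≤ a := hw0 _ (by simp)
    have hb : 0 ≤ b := hw0 _ (by simp)
    have hc : 0 ≤ c := hw0 _ (by simp)
    have hd : 0 ≤ d := hw0 _ (by simp)
    have hsum : a + b + c + d = 1 := by
      rw [Finset.sum_insert (by simp [hv01, hv0w1, hv0w2]),
        Finset.sum_insert (by simp [hv1w1, hv1w2]),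
        Finset.sum_insert (by simp [hw12]), Finset.sum_singleton] at hw1
      linarith
    have hxeq : x = a • v₀ + b • v₁ + c • w₁ + d • w₂ := by
      rw [← hwx, Finset.sum_insert (by simp [hv01, hv0w1, hv0w2]),
        Finset.sum_insert (by simp [hv1w1, hv1w2]),
        Finset.sum_insert (by simp [hw12]), Finset.sum_singleton]
      simp [add_assoc]; rfl
    have hslice : a + b = c + d := by
      have := congrArg Prod.snd hxeq
      simp only [v₀, v₁, w₁, w₂, Prod.snd_add, Prod.smul_mk, smul_eq_mul, hx2] at this
      linarith
    -- weights for the quadrilateral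
    have hmb : min b d ≤ b := min_le_left _ _
    have hmd : min b d ≤ d := min_le_right _ _
    have hm0 : 0 ≤ min b d := le_min hb hd
    have key : x = (2*a - 2*d + 2*min b d) • ((midpoint ℝ p₀ p₁, 0) : EuclideanSpace ℝ (Fin 2) × ℝ)
        + (2*d - 2*min b d) • ((midpoint ℝ p₀ p₂, 0) : EuclideanSpace ℝ (Fin 2) × ℝ)
        + (2*b - 2*min b d) • ((p₁, 0) : EuclideanSpace ℝ (Fin 2) × ℝ)
        + (2*min b d) • ((midpoint ℝ p₁ p₂, 0) : EuclideanSpace ℝ (Fin 2) × ℝ) := by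
      rw [hxeq]
      have : ∀ q r : EuclideanSpace ℝ (Fin 2), midpoint ℝ q r = (1/2 : ℝ) • q + (1/2 : ℝ) • r := by
        intro q r; rw [midpoint_eq_smul_add, smul_add]; norm_num
      apply Prod.ext
      · simp only [v₀, v₁, w₁, w₂, Prod.fst_add, Prod.smul_mk, this]
        match_scalars <;> linarith
      · simp only [v₀, v₁, w₁, w₂, Prod.snd_add, Prod.smul_mk, smul_eq_mul]
        ring_nf; linarith
    rw [key]
    rcases min_cases b d with ⟨h1, h2⟩ | ⟨h1, h2⟩ <;> rw [h1] <;>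
      exact mem_convexHull_quad (E := EuclideanSpace ℝ (Fin 2) × ℝ) _ _ _ _ (by linarith) (by linarith) (by linarith)
        (by linarith) (by linarith)
  · apply convexHull_min _ (((convex_convexHull ℝ _).inter (convex_univ.prod (convex_singleton 0))))
    rintro x (rfl | rfl | rfl | rfl) <;>
      refine ⟨?_, Set.mem_prod.2 ⟨trivial, rfl⟩⟩
    · have : ((midpoint ℝ p₀ p₁, 0) : EuclideanSpace ℝ (Fin 2) × ℝ)
          = (1/2 : ℝ) • v₀ + (0:ℝ) • v₁ + (1/2 : ℝ) • w₁ + (0:ℝ) • w₂ := by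
        apply Prod.ext
        · simp [v₀, w₁, midpoint_eq_smul_add, Prod.fst_add]
        · simp [v₀, v₁, w₁, w₂]
      rw [this]; exact mem_convexHull_quad (E := EuclideanSpace ℝ (Fin 2) × ℝ) _ _ _ _ (by norm_num) (by norm_num) (by norm_num) (by norm_num) (by norm_num)
    · have : ((midpoint ℝ p₀ p₂, 0) : EuclideanSpace ℝ (Fin 2) × ℝ)
          = (1/2 : ℝ) • v₀ + (0:ℝ) • v₁ + (0 : ℝ) • w₁ + (1/2:ℝ) • w₂ := by
        apply Prod.ext
        · simp [v₀, w₂, midpoint_eq_smul_add, Prod.fst_add]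
        · simp [v₀, v₁, w₁, w₂]
      rw [this]; exact mem_convexHull_quad (E := EuclideanSpace ℝ (Fin 2) × ℝ) _ _ _ _ (by norm_num) (by norm_num) (by norm_num) (by norm_num) (by norm_num)
    · have : ((p₁, 0) : EuclideanSpace ℝ (Fin 2) × ℝ)
          = (0 : ℝ) • v₀ + (1/2:ℝ) • v₁ + (1/2 : ℝ) • w₁ + (0:ℝ) • w₂ := by
        apply Prod.ext
        · simp [v₁, w₁, Prod.fst_add]; module
        · simp [v₀, v₁, w₁, w₂]
      rw [this]; exact mem_convexHull_quad (E := EuclideanSpace ℝ (Fin 2) × ℝ) _ _ _ _ (by norm_num) (by norm_num) (by norm_num) (by norm_num) (by norm_num)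
    · have : ((midpoint ℝ p₁ p₂, 0) : EuclideanSpace ℝ (Fin 2) × ℝ)
          = (0 : ℝ) • v₀ + (1/2:ℝ) • v₁ + (0 : ℝ) • w₁ + (1/2:ℝ) • w₂ := by
        apply Prod.ext
        · simp [v₁, w₂, midpoint_eq_smul_add, Prod.fst_add]
        · simp [v₀, v₁, w₁, w₂]
      rw [this]; exact mem_convexHull_quad (E := EuclideanSpace ℝ (Fin 2) × ℝ) _ _ _ _ (by norm_num) (by norm_num) (by norm_num) (by norm_num) (by norm_num)
end
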